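/- arXiv:math-ph/0402042 — 3 statements merged into one kernel-verified Lean document; each statement's English description precedes it below -/
import Mathlib

section
/- Let N > 0 and a ≠ 0 be real. The multiple Hermite polynomials satisfy, for all integers k₁, k₂ ≥ 1 and all z, the recurrence P_{k₁+1,k₂}(z) = (z − a)·P_{k₁,k₂}(z) − (k₁/N)·P_{k₁−1,k₂}(z) − (k₂/N)·P_{k₁,k₂−1}(z). -/
open MeasureTheory Filter Topology Polynomial Asymptotics

noncomputable section

/-- first weight -/
def w1 (N a x : ℝ) : ℝ := Real.exp (-N * (x ^ 2 / 2 - a * x))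

/-- second weight -/
def w2 (N a x : ℝ) : ℝ := Real.exp (-N * (x ^ 2 / 2 + a * x))

/-- `P` is the multiple Hermite polynomial with indices `k₁, k₂`. -/
def IsMHP (N a : ℝ) (k₁ k₂ : ℕ) (P : Polynomial ℝ) : Prop :=
  P.Monic ∧ P.natDegree = k₁ + k₂ ∧
  (∀ j < k₁, ∫ x : ℝ, P.eval x * x ^ j * w1 N a x = 0) ∧
  (∀ j < k₂, ∫ x : ℝ, P.eval x * x ^ j * w2 N a x = 0)

/-- the normalization constant `h⁽¹⁾` -/
def hc1 (N a : ℝ) (k₁ : ℕ) (P : Polynomial ℝ) : ℝ :=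
  ∫ x : ℝ, P.eval x * x ^ k₁ * w1 N a x

/-- the normalization constant `h⁽²⁾` -/
def hc2 (N a : ℝ) (k₂ : ℕ) (P : Polynomial ℝ) : ℝ :=
  ∫ x : ℝ, P.eval x * x ^ k₂ * w2 N a x

namespace MHPAux

/-- raising operator -/
def Aop (N c : ℝ) (q : ℝ[X]) : ℝ[X] := derivative q + (C c - C N * X) * q

/-- adjoint-type operator on test polynomials -/
def Top (d : ℝ) (p : ℝ[X]) : ℝ[X] := derivative p + C d * p

/-- weighted polynomial function -/
def W (N c : ℝ) (q : ℝ[X]) (x : ℝ) : ℝ := q.eval x * Real.exp (c * x - N * x ^ 2 / 2)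

/-- Rodrigues-type polynomials -/
def Bp (N a : ℝ) (i j : ℕ) : ℝ[X] := (Aop N (N * a))^[i] ((Aop N (-(N * a)))^[j] 1)

lemma continuous_W (N c : ℝ) (q : ℝ[X]) : Continuous (W N c q) := by
  unfold W; fun_prop

lemma tendsto_W_atTop {N : ℝ} (hN : 0 < N) (c : ℝ) (q : ℝ[X]) :
    Tendsto (W N c q) atTop (𝓝 0) := by
  have key : Tendsto (fun x => ((q * q + 1).eval x) / Real.exp x) atTop (𝓝 0) :=
    Polynomial.tendsto_div_exp_atTop _
  have keyneg : Tendsto (fun x => -(((q * q + 1).eval x) / Real.exp x)) atTop (𝓝 0) := by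
    simpa using key.neg
  refine tendsto_of_tendsto_of_tendsto_of_le_of_le' keyneg key ?_ ?_
  · filter_upwards [eventually_ge_atTop (2 * (c + 1) / N), eventually_ge_atTop 0] with x hx hx0
    have h1 : |W N c q x| ≤ ((q * q + 1).eval x) / Real.exp x := by
      have habs : |q.eval x| ≤ q.eval x ^ 2 + 1 := by
        nlinarith [sq_nonneg (|q.eval x| - 1), sq_abs (q.eval x)]
      have hexp : Real.exp (c * x - N * x ^ 2 / 2) ≤ Real.exp (-x) := by
        apply Real.exp_le_exp.2
        have hNx : 2 * (c + 1) ≤ x * N := by rwa [div_le_iff₀ hN] at hx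
        nlinarith [mul_le_mul_of_nonneg_right hNx hx0]
      have : |W N c q x| = |q.eval x| * Real.exp (c * x - N * x ^ 2 / 2) := by
        rw [W, abs_mul, abs_of_pos (Real.exp_pos _)]
      rw [this]
      calc |q.eval x| * Real.exp (c * x - N * x ^ 2 / 2)
          ≤ (q.eval x ^ 2 + 1) * Real.exp (-x) := by
            apply mul_le_mul habs hexp (le_of_lt (Real.exp_pos _)) (by positivity)
        _ = ((q * q + 1).eval x) / Real.exp x := by
            rw [Real.exp_neg]; simp [eval_mul]; ring
    have := (abs_le.mp h1).1
    linarith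
  · filter_upwards [eventually_ge_atTop (2 * (c + 1) / N), eventually_ge_atTop 0] with x hx hx0
    have h1 : |W N c q x| ≤ ((q * q + 1).eval x) / Real.exp x := by
      have habs : |q.eval x| ≤ q.eval x ^ 2 + 1 := by
        nlinarith [sq_nonneg (|q.eval x| - 1), sq_abs (q.eval x)]
      have hexp : Real.exp (c * x - N * x ^ 2 / 2) ≤ Real.exp (-x) := by
        apply Real.exp_le_exp.2
        have hNx : 2 * (c + 1) ≤ x * N := by rwa [div_le_iff₀ hN] at hx
        nlinarith [mul_le_mul_of_nonneg_right hNx hx0]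
      have : |W N c q x| = |q.eval x| * Real.exp (c * x - N * x ^ 2 / 2) := by
        rw [W, abs_mul, abs_of_pos (Real.exp_pos _)]
      rw [this]
      calc |q.eval x| * Real.exp (c * x - N * x ^ 2 / 2)
          ≤ (q.eval x ^ 2 + 1) * Real.exp (-x) := by
            apply mul_le_mul habs hexp (le_of_lt (Real.exp_pos _)) (by positivity)
        _ = ((q * q + 1).eval x) / Real.exp x := by
            rw [Real.exp_neg]; simp [eval_mul]; ring
    exact (abs_le.mp h1).2

lemma tendsto_W_atBot {N : ℝ} (hN : 0 < N) (c : ℝ) (q : ℝ[X]) :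
    Tendsto (W N c q) atBot (𝓝 0) := by
  have h := (tendsto_W_atTop hN (-c) (q.comp (-X))).comp tendsto_neg_atBot_atTop
  convert h using 1
  funext x
  simp only [Function.comp_apply, W, eval_comp, eval_neg, eval_X, neg_neg]
  rw [show -c * -x - N * (-x) ^ 2 / 2 = c * x - N * x ^ 2 / 2 by ring]

lemma exists_bound (f : ℝ → ℝ) (hc : Continuous f) (h1 : Tendsto f atTop (𝓝 0))
    (h2 : Tendsto f atBot (𝓝 0)) : ∃ C : ℝ, ∀ x, |f x| ≤ C := by
  have e1 : ∀ᶠ x in atTop, |f x| ≤ 1 := by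
    have := h1.eventually_mem (Metric.closedBall_mem_nhds (0:ℝ) one_pos)
    filter_upwards [this] with x hx
    simpa [Real.dist_eq] using hx
  have e2 : ∀ᶠ x in atBot, |f x| ≤ 1 := by
    have := h2.eventually_mem (Metric.closedBall_mem_nhds (0:ℝ) one_pos)
    filter_upwards [this] with x hx
    simpa [Real.dist_eq] using hx
  obtain ⟨R1, hR1⟩ := eventually_atTop.mp e1
  obtain ⟨R2, hR2⟩ := eventually_atBot.mp e2
  obtain ⟨C, hC⟩ := (isCompact_Icc (a := R2) (b := R1)).exists_bound_of_continuousOn hc.continuousOn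
  refine ⟨max C 1, fun x => ?_⟩
  rcases le_total x R2 with h | h
  · exact le_max_of_le_right (hR2 x h)
  rcases le_total R1 x with h' | h'
  · exact le_max_of_le_right (hR1 x h')
  · exact le_max_of_le_left (by simpa [Real.norm_eq_abs] using hC x ⟨h, h'⟩)

lemma integrable_W {N : ℝ} (hN : 0 < N) (c : ℝ) (q : ℝ[X]) :
    Integrable (W N c q) := by
  obtain ⟨C, hC⟩ := exists_bound (W (N / 2) c q) (continuous_W _ _ _)
    (tendsto_W_atTop (by linarith) c q) (tendsto_W_atBot (by linarith) c q)
  have hC0 : 0 ≤ C := le_trans (abs_nonneg _) (hC 0)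
  have hint : Integrable (fun x : ℝ => C * Real.exp (-(N / 4) * x ^ 2)) :=
    (integrable_exp_neg_mul_sq (by linarith)).const_mul C
  apply hint.mono ((continuous_W N c q).aestronglyMeasurable)
  filter_upwards with x
  have hsplit : W N c q x = W (N / 2) c q x * Real.exp (-(N / 4) * x ^ 2) := by
    rw [W, W, mul_assoc, ← Real.exp_add]
    congr 2
    ring
  rw [Real.norm_eq_abs, Real.norm_eq_abs, hsplit, abs_mul, abs_of_pos (Real.exp_pos _),
    abs_of_nonneg (by positivity : (0:ℝ) ≤ C * Real.exp (-(N / 4) * x ^ 2))]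
  exact mul_le_mul_of_nonneg_right (hC x) (le_of_lt (Real.exp_pos _))

lemma hasDerivAt_W (N c : ℝ) (q : ℝ[X]) (x : ℝ) :
    HasDerivAt (W N c q) (W N c (Aop N c q) x) x := by
  have h1 : HasDerivAt (fun x : ℝ => c * x - N * x ^ 2 / 2) (c - N * x) x := by
    have := (((hasDerivAt_pow 2 x).const_mul N).div_const 2)
    have h2 := ((hasDerivAt_id x).const_mul c).sub this
    refine HasDerivAt.congr_deriv h2 ?_
    simp; ring
  have h2 := h1.exp
  have h3 := (q.hasDerivAt x).mul h2
  refine HasDerivAt.congr_deriv h3 ?_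
  simp only [W, Aop, eval_add, eval_mul, eval_sub, eval_C, eval_X]
  ring

lemma integral_W_Aop {N : ℝ} (hN : 0 < N) (c : ℝ) (q : ℝ[X]) :
    ∫ x : ℝ, W N c (Aop N c q) x = 0 := by
  have hint : Integrable (W N c (Aop N c q)) := integrable_W hN c _
  have key : Tendsto (fun T : ℝ => ∫ x in (-T)..T, W N c (Aop N c q) x) atTop
      (𝓝 (∫ x : ℝ, W N c (Aop N c q) x)) :=
    intervalIntegral_tendsto_integral hint tendsto_neg_atTop_atBot tendsto_id
  have heq : ∀ T : ℝ, ∫ x in (-T)..T, W N c (Aop N c q) x = W N c q T - W N c q (-T) := by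
    intro T
    exact intervalIntegral.integral_eq_sub_of_hasDerivAt
      (fun x _ => hasDerivAt_W N c q x) hint.intervalIntegrable
  have lim2 : Tendsto (fun T : ℝ => W N c q T - W N c q (-T)) atTop (𝓝 (0 - 0)) :=
    (tendsto_W_atTop hN c q).sub ((tendsto_W_atBot hN c q).comp tendsto_neg_atTop_atBot)
  have := tendsto_nhds_unique (key.congr (fun T => heq T)) lim2
  simpa using this


lemma poly_mul_W (N c : ℝ) (p q : ℝ[X]) (x : ℝ) :
    p.eval x * W N c q x = W N c (p * q) x := by
  simp [W, eval_mul]; ring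

lemma integral_peel {N : ℝ} (hN : 0 < N) (b c : ℝ) (p q : ℝ[X]) :
    ∫ x : ℝ, p.eval x * W N b (Aop N c q) x
      = -∫ x : ℝ, (Top (b - c) p).eval x * W N b q x := by
  have hpoly : p * Aop N c q = Aop N b (p * q) - (Top (b - c) p) * q := by
    simp only [Aop, Top, derivative_mul, map_sub]
    ring
  have hfun : (fun x : ℝ => p.eval x * W N b (Aop N c q) x)
      = fun x : ℝ => W N b (Aop N b (p * q)) x - (Top (b - c) p).eval x * W N b q x := by
    funext x
    rw [poly_mul_W, poly_mul_W, hpoly]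
    simp [W, eval_sub]
    ring
  rw [hfun]
  have h1 : Integrable (W N b (Aop N b (p * q))) := integrable_W hN _ _
  have h2 : Integrable (fun x : ℝ => (Top (b - c) p).eval x * W N b q x) := by
    have := integrable_W hN b ((Top (b - c) p) * q)
    apply this.congr
    filter_upwards with x
    rw [poly_mul_W]
  rw [integral_sub h1 h2, integral_W_Aop hN]
  simp

lemma integral_iter {N : ℝ} (hN : 0 < N) (b c : ℝ) (q : ℝ[X]) :
    ∀ (n : ℕ) (p : ℝ[X]), ∫ x : ℝ, p.eval x * W N b ((Aop N c)^[n] q) x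
      = (-1 : ℝ) ^ n * ∫ x : ℝ, ((Top (b - c))^[n] p).eval x * W N b q x := by
  intro n
  induction n with
  | zero => intro p; simp
  | succ n ih =>
    intro p
    rw [Function.iterate_succ_apply', integral_peel hN, ih (Top (b - c) p),
      ← Function.iterate_succ_apply]
    ring

lemma Aop_degree {N : ℝ} (hN : N ≠ 0) (c : ℝ) {q : ℝ[X]} (hq : q ≠ 0) :
    (Aop N c q).degree = q.degree + 1 ∧ (Aop N c q).leadingCoeff = -N * q.leadingCoeff := by
  have hlin : (C c - C N * X : ℝ[X]) = C (-N) * X + C c := by rw [map_neg]; ring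
  have hNn : (-N : ℝ) ≠ 0 := neg_ne_zero.mpr hN
  have hld : (C c - C N * X : ℝ[X]).degree = 1 := by rw [hlin]; exact degree_linear hNn
  have hll : (C c - C N * X : ℝ[X]).leadingCoeff = -N := by rw [hlin]; exact leadingCoeff_linear hNn
  have hmul : ((C c - C N * X) * q).degree = q.degree + 1 := by
    rw [degree_mul, hld]; ring
  have hdd : (derivative q).degree < ((C c - C N * X) * q).degree := by
    rw [hmul]
    calc (derivative q).degree < q.degree := degree_derivative_lt hq
      _ ≤ q.degree + 1 := by
          rw [degree_eq_natDegree hq]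
          exact_mod_cast le_of_lt (by exact_mod_cast Nat.lt_succ_self q.natDegree :
            ((q.natDegree : WithBot ℕ) < (q.natDegree : ℕ) + 1))
  constructor
  · rw [Aop, degree_add_eq_right_of_degree_lt hdd, hmul]
  · rw [Aop, leadingCoeff_add_of_degree_lt hdd, leadingCoeff_mul, hll]

lemma iter_Aop_facts {N : ℝ} (hN : N ≠ 0) (c : ℝ) {q : ℝ[X]} (hq : q ≠ 0) (n : ℕ) :
    ((Aop N c)^[n] q) ≠ 0 ∧ ((Aop N c)^[n] q).natDegree = q.natDegree + n ∧
      ((Aop N c)^[n] q).leadingCoeff = (-N) ^ n * q.leadingCoeff := by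
  induction n with
  | zero => exact ⟨hq, by simp, by simp⟩
  | succ n ih =>
    obtain ⟨h0, hd, hl⟩ := ih
    have hA := Aop_degree hN c h0
    have h0' : Aop N c ((Aop N c)^[n] q) ≠ 0 := by
      intro h
      have := hA.2
      rw [h] at this
      simp only [leadingCoeff_zero] at this
      exact (mul_ne_zero (neg_ne_zero.mpr hN) (leadingCoeff_ne_zero.mpr h0)) this.symm
    refine ⟨by rwa [Function.iterate_succ_apply'], ?_, ?_⟩
    · rw [Function.iterate_succ_apply']
      have := hA.1
      rw [degree_eq_natDegree h0, degree_eq_natDegree h0', hd] at this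
      exact_mod_cast this
    · rw [Function.iterate_succ_apply', hA.2, hl, pow_succ]
      ring

lemma Bp_ne_zero {N : ℝ} (hN : N ≠ 0) (a : ℝ) (i j : ℕ) : Bp N a i j ≠ 0 := by
  have h1 := iter_Aop_facts hN (-(N * a)) (q := 1) one_ne_zero j
  exact (iter_Aop_facts hN (N * a) h1.1 i).1

lemma Bp_natDegree {N : ℝ} (hN : N ≠ 0) (a : ℝ) (i j : ℕ) :
    (Bp N a i j).natDegree = i + j := by
  have h1 := iter_Aop_facts hN (-(N * a)) (q := 1) one_ne_zero j
  have h2 := (iter_Aop_facts hN (N * a) h1.1 i).2.1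
  rw [Bp, h2, h1.2.1, natDegree_one]
  omega

lemma Bp_leadingCoeff {N : ℝ} (hN : N ≠ 0) (a : ℝ) (i j : ℕ) :
    (Bp N a i j).leadingCoeff = (-N) ^ (i + j) := by
  have h1 := iter_Aop_facts hN (-(N * a)) (q := 1) one_ne_zero j
  have h2 := (iter_Aop_facts hN (N * a) h1.1 i).2.2
  rw [Bp, h2, h1.2.2, leadingCoeff_one, mul_one, ← pow_add, Nat.add_comm]

lemma Top_natDegree_le (d : ℝ) (p : ℝ[X]) : (Top d p).natDegree ≤ p.natDegree := by
  apply le_trans (natDegree_add_le _ _)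
  exact max_le (le_trans (natDegree_derivative_le p) (Nat.sub_le _ _)) (natDegree_C_mul_le _ _)

lemma Top_iter_natDegree_le (d : ℝ) (p : ℝ[X]) (n : ℕ) :
    ((Top d)^[n] p).natDegree ≤ p.natDegree := by
  induction n with
  | zero => simp
  | succ n ih =>
    rw [Function.iterate_succ_apply']
    exact le_trans (Top_natDegree_le _ _) ih

lemma Top_coeff_of_le (d : ℝ) {p : ℝ[X]} {k : ℕ} (h : p.natDegree ≤ k) :
    (Top d p).coeff k = d * p.coeff k := by
  rw [Top, coeff_add, coeff_derivative, coeff_C_mul,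
    coeff_eq_zero_of_natDegree_lt (lt_of_le_of_lt h (Nat.lt_succ_self k))]
  simp

lemma Top_iter_coeff (d : ℝ) {p : ℝ[X]} {k : ℕ} (h : p.natDegree ≤ k) (n : ℕ) :
    ((Top d)^[n] p).coeff k = d ^ n * p.coeff k := by
  induction n with
  | zero => simp
  | succ n ih =>
    rw [Function.iterate_succ_apply', Top_coeff_of_le d (le_trans (Top_iter_natDegree_le d p n) h),
      ih, pow_succ]
    ring

lemma iter_derivative_eq_C {p : ℝ[X]} {k : ℕ} (h : p.natDegree ≤ k) :
    derivative^[k] p = C ((k.factorial : ℝ) * p.coeff k) := by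
  have h0 : (derivative^[k] p).natDegree ≤ 0 :=
    le_trans (natDegree_iterate_derivative p k) (by omega)
  rw [eq_C_of_natDegree_le_zero h0]
  congr 1
  rw [coeff_iterate_derivative]
  simp [Nat.descFactorial_self, nsmul_eq_mul]


lemma integrand_w1 (N a : ℝ) (p : ℝ[X]) (l : ℕ) (x : ℝ) :
    p.eval x * x ^ l * w1 N a x = (X ^ l : ℝ[X]).eval x * W N (N * a) p x := by
  rw [w1, W, show -N * (x ^ 2 / 2 - a * x) = N * a * x - N * x ^ 2 / 2 by ring]
  simp [eval_pow]
  ring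

lemma integrand_w2 (N a : ℝ) (p : ℝ[X]) (l : ℕ) (x : ℝ) :
    p.eval x * x ^ l * w2 N a x = (X ^ l : ℝ[X]).eval x * W N (-(N * a)) p x := by
  rw [w2, W, show -N * (x ^ 2 / 2 + a * x) = -(N * a) * x - N * x ^ 2 / 2 by ring]
  simp [eval_pow]
  ring

lemma integrable_w1 {N : ℝ} (hN : 0 < N) (a : ℝ) (p : ℝ[X]) (l : ℕ) :
    Integrable (fun x : ℝ => p.eval x * x ^ l * w1 N a x) := by
  apply (integrable_W hN (N * a) ((X : ℝ[X]) ^ l * p)).congr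
  filter_upwards with x
  rw [← poly_mul_W, ← integrand_w1]

lemma integrable_w2 {N : ℝ} (hN : 0 < N) (a : ℝ) (p : ℝ[X]) (l : ℕ) :
    Integrable (fun x : ℝ => p.eval x * x ^ l * w2 N a x) := by
  apply (integrable_W hN (-(N * a)) ((X : ℝ[X]) ^ l * p)).congr
  filter_upwards with x
  rw [← poly_mul_W, ← integrand_w2]

lemma Top_zero_eq_derivative : Top (0 : ℝ) = derivative := by
  funext p; simp [Top]

lemma integral_Bp_w1 {N : ℝ} (hN : 0 < N) (a : ℝ) {i j l : ℕ} (hl : l < i) :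
    ∫ x : ℝ, (Bp N a i j).eval x * x ^ l * w1 N a x = 0 := by
  simp_rw [integrand_w1]
  rw [Bp, integral_iter hN, sub_self, Top_zero_eq_derivative,
    iterate_derivative_eq_zero (by rw [natDegree_X_pow]; exact hl)]
  simp

lemma integral_Bp_w2 {N : ℝ} (hN : 0 < N) (a : ℝ) {i j l : ℕ} (hl : l < j) :
    ∫ x : ℝ, (Bp N a i j).eval x * x ^ l * w2 N a x = 0 := by
  simp_rw [integrand_w2]
  rw [Bp, integral_iter hN, integral_iter hN, sub_self, Top_zero_eq_derivative,
    iterate_derivative_eq_zero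
      (lt_of_le_of_lt (le_trans (Top_iter_natDegree_le _ _ _) (le_of_eq (natDegree_X_pow _))) hl)]
  simp

lemma integral_W_one_pos {N : ℝ} (hN : 0 < N) (c : ℝ) : 0 < ∫ x : ℝ, W N c 1 x := by
  rw [integral_pos_iff_support_of_nonneg_ae]
  · have : Function.support (W N c 1) = Set.univ := by
      apply Set.eq_univ_iff_forall.2
      intro x
      simp [W, Real.exp_ne_zero]
    rw [this]
    simp
  · filter_upwards with x
    simp only [W, eval_one, one_mul]
    positivity
  · exact integrable_W hN c 1

lemma Top_iter_C (d r : ℝ) (n : ℕ) : (Top d)^[n] (C r) = C (d ^ n * r) := by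
  have h0 : ((Top d)^[n] (C r)).natDegree ≤ 0 :=
    le_trans (Top_iter_natDegree_le d (C r) n) (le_of_eq (natDegree_C r))
  rw [eq_C_of_natDegree_le_zero h0]
  congr 1
  rw [Top_iter_coeff d (le_of_eq (natDegree_C r)) n]
  simp

lemma hc1_Bp {N : ℝ} (hN : 0 < N) {a : ℝ} (ha : a ≠ 0) (i j : ℕ) :
    ∫ x : ℝ, (Bp N a i j).eval x * x ^ i * w1 N a x ≠ 0 := by
  simp_rw [integrand_w1]
  rw [Bp, integral_iter hN, sub_self, Top_zero_eq_derivative,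
    iter_derivative_eq_C (le_of_eq (natDegree_X_pow i)),
    coeff_X_pow, if_pos rfl, mul_one]
  rw [integral_iter hN]
  rw [Top_iter_C]
  simp_rw [eval_C]
  rw [MeasureTheory.integral_const_mul]
  have h2Na : (N * a - -(N * a)) ≠ 0 := by
    intro h
    apply ha
    have : 2 * (N * a) = 0 := by linarith [h]
    have := mul_eq_zero.mp this
    rcases this with h' | h'
    · norm_num at h'
    · rcases mul_eq_zero.mp h' with h'' | h''
      · exact absurd h'' (ne_of_gt hN)
      · exact h''
  apply mul_ne_zero (pow_ne_zero _ (by norm_num))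
  apply mul_ne_zero (pow_ne_zero _ (by norm_num))
  apply mul_ne_zero
  · apply mul_ne_zero (pow_ne_zero _ h2Na)
    exact_mod_cast Nat.factorial_ne_zero i
  · exact ne_of_gt (integral_W_one_pos hN _)

lemma hc2_Bp {N : ℝ} (hN : 0 < N) {a : ℝ} (ha : a ≠ 0) (i j : ℕ) :
    ∫ x : ℝ, (Bp N a i j).eval x * x ^ j * w2 N a x ≠ 0 := by
  simp_rw [integrand_w2]
  rw [Bp, integral_iter hN, integral_iter hN, sub_self, Top_zero_eq_derivative,
    iter_derivative_eq_C (le_trans (Top_iter_natDegree_le _ _ _) (le_of_eq (natDegree_X_pow j))),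
    Top_iter_coeff _ (le_of_eq (natDegree_X_pow j)), coeff_X_pow, if_pos rfl, mul_one]
  simp_rw [eval_C]
  rw [MeasureTheory.integral_const_mul]
  have h2Na : (-(N * a) - N * a) ≠ 0 := by
    intro h
    apply ha
    have : 2 * (N * a) = 0 := by linarith [h]
    rcases mul_eq_zero.mp this with h' | h'
    · norm_num at h'
    · rcases mul_eq_zero.mp h' with h'' | h''
      · exact absurd h'' (ne_of_gt hN)
      · exact h''
  apply mul_ne_zero (pow_ne_zero _ (by norm_num))
  apply mul_ne_zero (pow_ne_zero _ (by norm_num))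
  apply mul_ne_zero
  · apply mul_ne_zero
    · exact_mod_cast Nat.factorial_ne_zero j
    · exact pow_ne_zero _ h2Na
  · exact ne_of_gt (integral_W_one_pos hN _)


lemma integral_sub_w1 {N : ℝ} (hN : 0 < N) (a : ℝ) (Q B : ℝ[X]) (t : ℝ) (l : ℕ) :
    ∫ x : ℝ, (Q - C t * B).eval x * x ^ l * w1 N a x
      = (∫ x : ℝ, Q.eval x * x ^ l * w1 N a x) - t * ∫ x : ℝ, B.eval x * x ^ l * w1 N a x := by
  have hfun : (fun x : ℝ => (Q - C t * B).eval x * x ^ l * w1 N a x)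
      = fun x : ℝ => Q.eval x * x ^ l * w1 N a x - t * (B.eval x * x ^ l * w1 N a x) := by
    funext x
    simp only [eval_sub, eval_mul, eval_C]
    ring
  rw [hfun, integral_sub (integrable_w1 hN a Q l) ((integrable_w1 hN a B l).const_mul t),
    MeasureTheory.integral_const_mul]

lemma integral_sub_w2 {N : ℝ} (hN : 0 < N) (a : ℝ) (Q B : ℝ[X]) (t : ℝ) (l : ℕ) :
    ∫ x : ℝ, (Q - C t * B).eval x * x ^ l * w2 N a x
      = (∫ x : ℝ, Q.eval x * x ^ l * w2 N a x) - t * ∫ x : ℝ, B.eval x * x ^ l * w2 N a x := by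
  have hfun : (fun x : ℝ => (Q - C t * B).eval x * x ^ l * w2 N a x)
      = fun x : ℝ => Q.eval x * x ^ l * w2 N a x - t * (B.eval x * x ^ l * w2 N a x) := by
    funext x
    simp only [eval_sub, eval_mul, eval_C]
    ring
  rw [hfun, integral_sub (integrable_w2 hN a Q l) ((integrable_w2 hN a B l).const_mul t),
    MeasureTheory.integral_const_mul]

lemma integral_Cmul_w1 (N a : ℝ) (B : ℝ[X]) (t : ℝ) (l : ℕ) :
    ∫ x : ℝ, (C t * B).eval x * x ^ l * w1 N a x
      = t * ∫ x : ℝ, B.eval x * x ^ l * w1 N a x := by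
  rw [← MeasureTheory.integral_const_mul]
  congr 1
  funext x
  simp only [eval_mul, eval_C]
  ring

lemma integral_Cmul_w2 (N a : ℝ) (B : ℝ[X]) (t : ℝ) (l : ℕ) :
    ∫ x : ℝ, (C t * B).eval x * x ^ l * w2 N a x
      = t * ∫ x : ℝ, B.eval x * x ^ l * w2 N a x := by
  rw [← MeasureTheory.integral_const_mul]
  congr 1
  funext x
  simp only [eval_mul, eval_C]
  ring

lemma uniq {N : ℝ} (hN : 0 < N) {a : ℝ} (ha : a ≠ 0) :
    ∀ (n n₁ n₂ : ℕ), n₁ + n₂ = n → ∀ D : ℝ[X], D.degree < ((n₁ + n₂ : ℕ) : WithBot ℕ) →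
      (∀ j < n₁, ∫ x : ℝ, D.eval x * x ^ j * w1 N a x = 0) →
      (∀ j < n₂, ∫ x : ℝ, D.eval x * x ^ j * w2 N a x = 0) → D = 0 := by
  have hNne : N ≠ 0 := ne_of_gt hN
  intro n
  induction n with
  | zero =>
    intro n₁ n₂ hs D hdeg _ _
    have h1 : n₁ = 0 := by omega
    have h2 : n₂ = 0 := by omega
    subst h1; subst h2
    by_contra hD
    rw [degree_eq_natDegree hD] at hdeg
    exact absurd hdeg (by simp)
  | succ n ih =>
    intro n₁ n₂ hs D hdeg h1 h2
    by_contra hD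
    cases n₂ with
    | zero =>
      have hn₁ : n₁ = n + 1 := by omega
      subst hn₁
      by_cases hd : D.degree < ((n : ℕ) : WithBot ℕ)
      · exact hD (ih n 0 (by omega) D (by simpa using hd)
          (fun j hj => h1 j (by omega)) (fun j hj => absurd hj (by omega)))
      · push_neg at hd
        have hdn : D.degree = ((n : ℕ) : WithBot ℕ) := by
          refine le_antisymm ?_ hd
          rw [degree_eq_natDegree hD] at hdeg ⊢
          have hlt : D.natDegree < n + 1 + 0 := by exact_mod_cast hdeg
          exact_mod_cast (by omega : D.natDegree ≤ n)
        set B := Bp N a n 0 with hB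
        have hBne : B ≠ 0 := Bp_ne_zero hNne a n 0
        have hBd : B.natDegree = n := by rw [hB, Bp_natDegree hNne]; omega
        have hBl : B.leadingCoeff = (-N) ^ n := by rw [hB, Bp_leadingCoeff hNne]; norm_num
        have hNn : ((-N) ^ n : ℝ) ≠ 0 := pow_ne_zero _ (neg_ne_zero.mpr hNne)
        set t := D.leadingCoeff / ((-N) ^ n) with ht
        have hE : (D - C t * B).degree < ((n : ℕ) : WithBot ℕ) := by
          have ht0 : t ≠ 0 := div_ne_zero (leadingCoeff_ne_zero.mpr hD) hNn
          have := degree_sub_lt (p := D) (q := C t * B) ?_ hD ?_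
          · rwa [hdn] at this
          · rw [hdn, degree_mul, degree_C ht0, degree_eq_natDegree hBne, hBd]
            simp
          · rw [leadingCoeff_mul, leadingCoeff_C, hBl, ht, div_mul_cancel₀ _ hNn]
        have hE0 : D - C t * B = 0 := by
          apply ih n 0 (by omega) _ (by simpa using hE)
          · intro j hj
            rw [integral_sub_w1 hN, h1 j (by omega), hB, integral_Bp_w1 hN a hj]
            ring
          · intro j hj
            exact absurd hj (by omega)
        have hDB : D = C t * B := sub_eq_zero.mp hE0
        have hzero := h1 n (by omega)
        rw [hDB, integral_Cmul_w1] at hzero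
        rcases mul_eq_zero.mp hzero with h | h
        · rw [ht, _root_.div_eq_zero_iff] at h
          rcases h with h | h
          · exact hD (leadingCoeff_eq_zero.mp h)
          · exact hNn h
        · exact hc1_Bp hN ha n 0 h
    | succ l =>
      by_cases hd : D.degree < (((n₁ + l : ℕ)) : WithBot ℕ)
      · exact hD (ih n₁ l (by omega) D hd h1 (fun j hj => h2 j (by omega)))
      · push_neg at hd
        have hdn : D.degree = (((n₁ + l : ℕ)) : WithBot ℕ) := by
          refine le_antisymm ?_ hd
          rw [degree_eq_natDegree hD] at hdeg ⊢
          have hlt : D.natDegree < n₁ + (l + 1) := by exact_mod_cast hdeg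
          exact_mod_cast (by omega : D.natDegree ≤ n₁ + l)
        set B := Bp N a n₁ l with hB
        have hBne : B ≠ 0 := Bp_ne_zero hNne a n₁ l
        have hBd : B.natDegree = n₁ + l := by rw [hB, Bp_natDegree hNne]
        have hBl : B.leadingCoeff = (-N) ^ (n₁ + l) := by rw [hB, Bp_leadingCoeff hNne]
        have hNn : ((-N) ^ (n₁ + l) : ℝ) ≠ 0 := pow_ne_zero _ (neg_ne_zero.mpr hNne)
        set t := D.leadingCoeff / ((-N) ^ (n₁ + l)) with ht
        have hE : (D - C t * B).degree < (((n₁ + l : ℕ)) : WithBot ℕ) := by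
          have ht0 : t ≠ 0 := div_ne_zero (leadingCoeff_ne_zero.mpr hD) hNn
          have := degree_sub_lt (p := D) (q := C t * B) ?_ hD ?_
          · rwa [hdn] at this
          · rw [hdn, degree_mul, degree_C ht0, degree_eq_natDegree hBne, hBd]
            simp
          · rw [leadingCoeff_mul, leadingCoeff_C, hBl, ht, div_mul_cancel₀ _ hNn]
        have hE0 : D - C t * B = 0 := by
          apply ih n₁ l (by omega) _ hE
          · intro j hj
            rw [integral_sub_w1 hN, h1 j hj, hB, integral_Bp_w1 hN a hj]
            ring
          · intro j hj
            rw [integral_sub_w2 hN, h2 j (by omega), hB, integral_Bp_w2 hN a hj]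
            ring
        have hDB : D = C t * B := sub_eq_zero.mp hE0
        have hzero := h2 l (by omega)
        rw [hDB, integral_Cmul_w2] at hzero
        rcases mul_eq_zero.mp hzero with h | h
        · rw [ht, _root_.div_eq_zero_iff] at h
          rcases h with h | h
          · exact hD (leadingCoeff_eq_zero.mp h)
          · exact hNn h
        · exact hc2_Bp hN ha n₁ l h

lemma P_eq {N : ℝ} (hN : 0 < N) {a : ℝ} (ha : a ≠ 0) {i j : ℕ} {Q : ℝ[X]}
    (h : IsMHP N a i j Q) : Q = C (((-N)⁻¹ : ℝ) ^ (i + j)) * Bp N a i j := by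
  obtain ⟨hm, hdg, h1, h2⟩ := h
  have hNne : N ≠ 0 := ne_of_gt hN
  have hNne' : (-N : ℝ) ≠ 0 := neg_ne_zero.mpr hNne
  set r := (((-N)⁻¹ : ℝ)) ^ (i + j) with hr
  have hr0 : r ≠ 0 := pow_ne_zero _ (inv_ne_zero hNne')
  have hBne : Bp N a i j ≠ 0 := Bp_ne_zero hNne a i j
  have hQd : Q.degree = ((i + j : ℕ) : WithBot ℕ) := by
    rw [degree_eq_natDegree hm.ne_zero, hdg]
  have hD : (Q - C r * Bp N a i j).degree < ((i + j : ℕ) : WithBot ℕ) := by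
    have := degree_sub_lt (p := Q) (q := C r * Bp N a i j) ?_ hm.ne_zero ?_
    · rwa [hQd] at this
    · rw [hQd, degree_mul, degree_C hr0, degree_eq_natDegree hBne, Bp_natDegree hNne]
      simp
    · rw [leadingCoeff_mul, leadingCoeff_C, Bp_leadingCoeff hNne, hm.leadingCoeff, hr,
        ← mul_pow, inv_mul_cancel₀ hNne', one_pow]
  have hz := uniq hN ha (i + j) i j rfl _ hD ?_ ?_
  · exact sub_eq_zero.mp hz
  · intro l hl
    rw [integral_sub_w1 hN, h1 l hl, integral_Bp_w1 hN a hl]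
    ring
  · intro l hl
    rw [integral_sub_w2 hN, h2 l hl, integral_Bp_w2 hN a hl]
    ring

lemma Aop_zero (N c : ℝ) : Aop N c 0 = 0 := by simp [Aop]

lemma Aop_sub (N c : ℝ) (q r : ℝ[X]) : Aop N c (q - r) = Aop N c q - Aop N c r := by
  simp only [Aop, derivative_sub]
  ring

lemma Aop_Cmul (N c s : ℝ) (q : ℝ[X]) : Aop N c (C s * q) = C s * Aop N c q := by
  simp only [Aop, derivative_C_mul]
  ring

lemma iter_Aop_Cmul (N c s : ℝ) (q : ℝ[X]) (n : ℕ) :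
    (Aop N c)^[n] (C s * q) = C s * (Aop N c)^[n] q := by
  induction n with
  | zero => simp
  | succ n ih => rw [Function.iterate_succ_apply', Function.iterate_succ_apply', ih, Aop_Cmul]

lemma derivative_Aop (N c : ℝ) (q : ℝ[X]) :
    derivative (Aop N c q) = Aop N c (derivative q) - C N * q := by
  simp only [Aop, derivative_add, derivative_mul, derivative_sub, derivative_C,
    derivative_C_mul, derivative_X]
  ring

lemma derivative_iter_Aop (N c : ℝ) : ∀ (n : ℕ) (q : ℝ[X]),
    derivative ((Aop N c)^[n + 1] q)
      = (Aop N c)^[n + 1] (derivative q) - C (((n + 1 : ℕ) : ℝ) * N) * (Aop N c)^[n] q := by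
  intro n
  induction n with
  | zero =>
    intro q
    simp only [zero_add, Function.iterate_one, Function.iterate_zero, id_eq, derivative_Aop,
      Nat.cast_one, one_mul]
  | succ m ih =>
    intro q
    rw [show m + 1 + 1 = (m + 1) + 1 from rfl]
    rw [Function.iterate_succ_apply' (Aop N c) (m + 1) q, derivative_Aop, ih,
      Aop_sub, Aop_Cmul, ← Function.iterate_succ_apply' (Aop N c) (m + 1),
      ← Function.iterate_succ_apply' (Aop N c) m]
    have hC : (C (((m + 1 + 1 : ℕ) : ℝ) * N) : ℝ[X])
        = C (((m + 1 : ℕ) : ℝ) * N) + C N := by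
      rw [← map_add]
      congr 1
      push_cast
      ring
    linear_combination ((Aop N c)^[m + 1] q) * hC

lemma derivative_A2_one {N a : ℝ} (l : ℕ) :
    derivative ((Aop N (-(N * a)))^[l + 1] 1)
      = C (-(((l + 1 : ℕ) : ℝ) * N)) * (Aop N (-(N * a)))^[l] 1 := by
  rw [derivative_iter_Aop, derivative_one]
  have h0 : (Aop N (-(N * a)))^[l + 1] 0 = 0 := by
    induction (l + 1) with
    | zero => simp
    | succ k ih => rw [Function.iterate_succ_apply', ih, Aop_zero]
  rw [h0, map_neg]
  ring

lemma Bp_rec {N a : ℝ} (m l : ℕ) :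
    Bp N a (m + 2) (l + 1) = (C (N * a) - C N * X) * Bp N a (m + 1) (l + 1)
      - C (((m + 1 : ℕ) : ℝ) * N) * Bp N a m (l + 1)
      - C (((l + 1 : ℕ) : ℝ) * N) * Bp N a (m + 1) l := by
  have h1 : Bp N a (m + 2) (l + 1)
      = Aop N (N * a) (Bp N a (m + 1) (l + 1)) := by
    rw [Bp, Bp, show m + 2 = (m + 1) + 1 from rfl, Function.iterate_succ_apply']
  rw [h1, Aop]
  have hder : derivative (Bp N a (m + 1) (l + 1))
      = C (-(((l + 1 : ℕ) : ℝ) * N)) * Bp N a (m + 1) l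
        - C (((m + 1 : ℕ) : ℝ) * N) * Bp N a m (l + 1) := by
    rw [Bp, derivative_iter_Aop, derivative_A2_one, iter_Aop_Cmul]
    rw [Bp, Bp]
  rw [hder, map_neg]
  ring

end MHPAux

/-- Recurrence in the first index for multiple Hermite polynomials. -/
theorem statement13 (N a : ℝ) (hN : 0 < N) (ha : a ≠ 0)
    (P : ℕ → ℕ → Polynomial ℝ) (hP : ∀ k₁ k₂ : ℕ, IsMHP N a k₁ k₂ (P k₁ k₂))
    (k₁ k₂ : ℕ) (hk₁ : 1 ≤ k₁) (hk₂ : 1 ≤ k₂) :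
    ∀ z : ℝ, (P (k₁ + 1) k₂).eval z =
      (z - a) * (P k₁ k₂).eval z - (k₁ : ℝ) / N * (P (k₁ - 1) k₂).eval z -
        (k₂ : ℝ) / N * (P k₁ (k₂ - 1)).eval z := by
  obtain ⟨m, rfl⟩ : ∃ m, k₁ = m + 1 := ⟨k₁ - 1, by omega⟩
  obtain ⟨l, rfl⟩ : ∃ l, k₂ = l + 1 := ⟨k₂ - 1, by omega⟩
  have hNne : N ≠ 0 := ne_of_gt hN
  have hNne' : (-N : ℝ) ≠ 0 := neg_ne_zero.mpr hNne
  set s : ℝ := (-N)⁻¹ with hs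
  have hsN : s * (-N) = 1 := inv_mul_cancel₀ hNne'
  set n0 := m + l with hn0
  have Pid : P (m + 1 + 1) (l + 1) = (X - C a) * P (m + 1) (l + 1)
      - C (((m + 1 : ℕ) : ℝ) / N) * P m (l + 1)
      - C (((l + 1 : ℕ) : ℝ) / N) * P (m + 1) l := by
    rw [MHPAux.P_eq hN ha (hP (m + 1 + 1) (l + 1)), MHPAux.P_eq hN ha (hP (m + 1) (l + 1)),
      MHPAux.P_eq hN ha (hP m (l + 1)), MHPAux.P_eq hN ha (hP (m + 1) l)]
    rw [show m + 1 + 1 = m + 2 from rfl, MHPAux.Bp_rec m l,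
      show m + 1 + 1 + (l + 1) = n0 + 3 by omega, show m + 1 + (l + 1) = n0 + 2 by omega,
      show m + (l + 1) = n0 + 1 by omega, show m + 1 + l = n0 + 1 by omega]
    have hA : (C (s ^ (n0 + 3)) * (C (N * a) - C N * X) : ℝ[X])
        = (X - C a) * C (s ^ (n0 + 2)) := by
      have h1 : s ^ (n0 + 3) * N = -(s ^ (n0 + 2)) := by
        calc s ^ (n0 + 3) * N = s ^ (n0 + 2) * (s * (-N)) * (-1) := by ring
          _ = -(s ^ (n0 + 2)) := by rw [hsN]; ring
      have h2 : (C (s ^ (n0 + 3)) * C N : ℝ[X]) = -C (s ^ (n0 + 2)) := by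
        rw [← map_mul, h1, map_neg]
      have h3 : (C (N * a) : ℝ[X]) = C N * C a := by rw [map_mul]
      rw [h3]
      linear_combination (C a - X : ℝ[X]) * h2
    have hss : s ^ (n0 + 3) * N * N = s ^ (n0 + 1) := by
      calc s ^ (n0 + 3) * N * N = s ^ (n0 + 1) * ((s * (-N)) * (s * (-N))) := by ring
        _ = s ^ (n0 + 1) := by rw [hsN]; ring
    have hB1 : (C (s ^ (n0 + 3)) * C (((m + 1 : ℕ) : ℝ) * N) : ℝ[X])
        = C (((m + 1 : ℕ) : ℝ) / N) * C (s ^ (n0 + 1)) := by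
      rw [← map_mul, ← map_mul]
      congr 1
      rw [← hss]
      field_simp
    have hB2 : (C (s ^ (n0 + 3)) * C (((l + 1 : ℕ) : ℝ) * N) : ℝ[X])
        = C (((l + 1 : ℕ) : ℝ) / N) * C (s ^ (n0 + 1)) := by
      rw [← map_mul, ← map_mul]
      congr 1
      rw [← hss]
      field_simp
    linear_combination (MHPAux.Bp N a (m + 1) (l + 1)) * hA
      - (MHPAux.Bp N a m (l + 1)) * hB1 - (MHPAux.Bp N a (m + 1) l) * hB2
  intro z
  simp only [Nat.add_sub_cancel]
  rw [Pid]
  simp only [eval_sub, eval_mul, eval_C, eval_X]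

end
end

section
/- Let N > 0 and a ≠ 0 be real. The multiple Hermite polynomials satisfy, for all integers k₁, k₂ ≥ 1 and all z, the recurrence P_{k₁,k₂+1}(z) = (z + a)·P_{k₁,k₂}(z) − (k₁/N)·P_{k₁−1,k₂}(z) − (k₂/N)·P_{k₁,k₂−1}(z). -/
open MeasureTheory Filter Topology Polynomial Asymptotics
open Real Set

noncomputable section

namespace St14
set_option maxHeartbeats 1600000


set_option maxHeartbeats 800000

lemma gauss_tendsto_top (b : ℝ) (hb : 0 < b) (m : ℕ) (t : ℝ) :
    Tendsto (fun x : ℝ => x ^ m * rexp (-b * x ^ 2 + t * x)) atTop (𝓝 0) := by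
  have h1 : ∀ᶠ x : ℝ in atTop, ‖x ^ m * rexp (-b * x ^ 2 + t * x)‖ ≤ x ^ m * rexp (-x) := by
    filter_upwards [eventually_ge_atTop ((t+1)/b), eventually_ge_atTop 0] with x hx hx0
    have hexp : -b * x ^ 2 + t * x ≤ -x := by
      have : (t + 1) * x ≤ b * x ^ 2 := by
        have := mul_le_mul_of_nonneg_right ((div_le_iff₀ hb).mp hx) hx0
        nlinarith
      nlinarith
    rw [Real.norm_eq_abs, abs_mul, abs_of_nonneg (pow_nonneg hx0 m), abs_of_nonneg (exp_pos _).le]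
    exact mul_le_mul_of_nonneg_left (exp_le_exp.2 hexp) (pow_nonneg hx0 m)
  exact squeeze_zero_norm' h1 (tendsto_pow_mul_exp_neg_atTop_nhds_zero m)

lemma gauss_tendsto_bot (b : ℝ) (hb : 0 < b) (m : ℕ) (t : ℝ) :
    Tendsto (fun x : ℝ => x ^ m * rexp (-b * x ^ 2 + t * x)) atBot (𝓝 0) := by
  have h := (gauss_tendsto_top b hb m (-t)).comp tendsto_neg_atBot_atTop
  simp only [Function.comp_def] at h
  have h2 := h.const_mul ((-1 : ℝ) ^ m)
  rw [mul_zero] at h2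
  refine h2.congr fun x => ?_
  rw [← mul_assoc, ← mul_pow, show (-1:ℝ) * -x = x by ring,
    show -b * (-x) ^ 2 + -t * -x = -b * x ^ 2 + t * x by ring]

lemma gauss_integrable (b : ℝ) (hb : 0 < b) (m : ℕ) (t : ℝ) :
    Integrable (fun x : ℝ => x ^ m * rexp (-b * x ^ 2 + t * x)) := by
  have hcont : Continuous (fun x : ℝ => x ^ m * rexp (-b * x ^ 2 + t * x)) := by fun_prop
  have hbot : (fun x : ℝ => x ^ m * rexp (-b * x ^ 2 + t * x)) =O[atBot] (fun x : ℝ => rexp x) := by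
    have hlim : Tendsto (fun x : ℝ => (x ^ m * rexp (-b * x ^ 2 + t * x)) / rexp x) atBot (𝓝 0) := by
      refine (gauss_tendsto_bot b hb m (t - 1)).congr fun x => ?_
      rw [show -b * x ^ 2 + (t - 1) * x = (-b * x ^ 2 + t * x) - x by ring, exp_sub,
        ← mul_div_assoc]
    exact Asymptotics.isBigO_of_div_tendsto_nhds
      (Eventually.of_forall fun x hx => absurd hx (exp_ne_zero _)) 0 hlim
  have htop : (fun x : ℝ => x ^ m * rexp (-b * x ^ 2 + t * x)) =O[atTop] (fun x : ℝ => rexp (-x)) := by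
    have hlim : Tendsto (fun x : ℝ => (x ^ m * rexp (-b * x ^ 2 + t * x)) / rexp (-x)) atTop (𝓝 0) := by
      refine (gauss_tendsto_top b hb m (t + 1)).congr fun x => ?_
      rw [show -b * x ^ 2 + (t + 1) * x = (-b * x ^ 2 + t * x) - (-x) by ring, exp_sub,
        ← mul_div_assoc]
    exact Asymptotics.isBigO_of_div_tendsto_nhds
      (Eventually.of_forall fun x hx => absurd hx (exp_ne_zero _)) 0 hlim
  exact hcont.locallyIntegrable.integrable_of_isBigO_atBot_atTop
    hbot ⟨Iic 0, Iic_mem_atBot 0, integrableOn_exp_Iic 0⟩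
    htop ⟨Ioi 0, Ioi_mem_atTop 0, by simpa using exp_neg_integrableOn_Ioi (0:ℝ) one_pos⟩



def M0 (N : ℝ) : ℝ := ∫ x : ℝ, rexp (-(N/2) * x ^ 2)

lemma M0_pos {N : ℝ} (hN : 0 < N) : 0 < M0 N := by
  rw [M0, integral_gaussian]
  positivity

def qp (N : ℝ) : ℕ → Polynomial ℝ × Polynomial ℝ
  | 0 => (C (M0 N), C (M0 N / N) * X)
  | m+1 => ((qp N m).2, C N⁻¹ * X * (qp N m).2 + C (((m+1 : ℕ) : ℝ) / N) * (qp N m).1)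

def q (N : ℝ) (m : ℕ) : Polynomial ℝ := (qp N m).1

lemma q_zero (N : ℝ) : q N 0 = C (M0 N) := rfl
lemma q_one (N : ℝ) : q N 1 = C (M0 N / N) * X := rfl
lemma q_add_two (N : ℝ) (m : ℕ) :
    q N (m+2) = C N⁻¹ * X * q N (m+1) + C (((m+1 : ℕ) : ℝ) / N) * q N m := rfl

lemma q_succ (N : ℝ) (m : ℕ) :
    q N (m+1) = C N⁻¹ * X * q N m + C ((m : ℝ) / N) * q N (m-1) := by
  cases m with
  | zero =>
    simp only [Nat.cast_zero, zero_div, map_zero, zero_mul, add_zero]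
    rw [q_one, q_zero, div_eq_inv_mul, C_mul]
    ring
  | succ m => exact q_add_two N m

lemma q_deriv (N : ℝ) (m : ℕ) :
    derivative (q N m) = C ((m : ℝ) / N) * q N (m-1) := by
  induction m using Nat.twoStepInduction with
  | zero => simp [q_zero]
  | one =>
    rw [q_one, q_zero]
    simp only [derivative_mul, derivative_C, zero_mul, derivative_X, mul_one, zero_add,
      Nat.cast_one]
    rw [← C_mul, one_div, ← div_eq_inv_mul]
  | more m ih2 ih1 =>
    rw [q_add_two, derivative_add, derivative_mul, derivative_mul, derivative_C,
      derivative_mul, derivative_X, derivative_C, ih2, ih1]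
    simp only [zero_mul, zero_add, mul_one, Nat.add_sub_cancel]
    calc C N⁻¹ * q N (m+1) + C N⁻¹ * X * (C (((m+1:ℕ):ℝ)/N) * q N m)
            + C (((m+1:ℕ):ℝ)/N) * (C ((m:ℝ)/N) * q N (m-1))
        = C N⁻¹ * q N (m+1) + C (((m+1:ℕ):ℝ)/N) * (C N⁻¹ * X * q N m + C ((m:ℝ)/N) * q N (m-1)) := by
          ring
      _ = C N⁻¹ * q N (m+1) + C (((m+1:ℕ):ℝ)/N) * q N (m+1) := by rw [← q_succ]
      _ = C (((m+2:ℕ):ℝ)/N) * q N (m+1) := by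
          rw [← add_mul, ← C_add]
          congr 2
          rw [inv_eq_one_div, ← add_div]
          push_cast; ring

lemma q_natDegree_le (N : ℝ) (m : ℕ) : (q N m).natDegree ≤ m := by
  induction m using Nat.twoStepInduction with
  | zero => simp [q_zero]
  | one => exact (natDegree_C_mul_le _ _).trans (by simp)
  | more m ih2 ih1 =>
    rw [q_add_two]
    refine (natDegree_add_le _ _).trans (max_le ?_ ?_)
    · rw [mul_assoc]
      refine (natDegree_C_mul_le _ _).trans ((natDegree_mul_le).trans ?_)
      have := ih1
      simp only [natDegree_X]
      omega
    · exact (natDegree_C_mul_le _ _).trans (by omega)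

lemma q_coeff_self (N : ℝ) (m : ℕ) : (q N m).coeff m = M0 N / N ^ m := by
  induction m using Nat.twoStepInduction with
  | zero => simp [q_zero]
  | one => simp [q_one, coeff_C_mul]
  | more m ih2 ih1 =>
    rw [q_add_two, coeff_add, mul_assoc, coeff_C_mul, coeff_C_mul,
      coeff_eq_zero_of_natDegree_lt ((q_natDegree_le N m).trans_lt (by omega)), mul_zero,
      add_zero, coeff_X_mul, ih1]
    rcases eq_or_ne N 0 with rfl | hN0
    · simp
    · field_simp
      ring_nf

def phi (N : ℝ) (D : Polynomial ℝ) : Polynomial ℝ := D.sum fun m c => C c * q N m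

lemma phi_monomial (N : ℝ) (m : ℕ) (c : ℝ) : phi N (monomial m c) = C c * q N m :=
  sum_monomial_index c _ (by simp)

lemma phi_add (N : ℝ) (D E : Polynomial ℝ) : phi N (D + E) = phi N D + phi N E :=
  sum_add_index D E _ (fun i => by simp) (fun a b c => by rw [C_add]; ring)

lemma phi_zero (N : ℝ) : phi N 0 = 0 := sum_zero_index _

lemma phi_C_mul (N : ℝ) (c : ℝ) (D : Polynomial ℝ) : phi N (C c * D) = C c * phi N D := by
  induction D using Polynomial.induction_on' with
  | add p r hp hr => rw [mul_add, phi_add, phi_add, hp, hr, mul_add]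
  | monomial n a => rw [C_mul_monomial, phi_monomial, phi_monomial, C_mul]; ring

lemma phi_neg (N : ℝ) (D : Polynomial ℝ) : phi N (-D) = - phi N D := by
  have := phi_C_mul N (-1) D
  simpa using this

lemma phi_sub (N : ℝ) (D E : Polynomial ℝ) : phi N (D - E) = phi N D - phi N E := by
  rw [sub_eq_add_neg, phi_add, phi_neg, sub_eq_add_neg]

lemma phi_X_mul (N : ℝ) (D : Polynomial ℝ) :
    phi N (X * D) = C N⁻¹ * X * phi N D + derivative (phi N D) := by
  induction D using Polynomial.induction_on' with
  | add p r hp hr => rw [mul_add, phi_add, phi_add, hp, hr, derivative_add]; ring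
  | monomial n a =>
    rw [X_mul_monomial, phi_monomial, phi_monomial, q_succ, derivative_C_mul, q_deriv]
    ring

lemma phi_natDegree_le (N : ℝ) (D : Polynomial ℝ) : (phi N D).natDegree ≤ D.natDegree := by
  refine natDegree_sum_le_of_forall_le _ _ fun i hi => ?_
  exact (natDegree_C_mul_le _ _).trans ((q_natDegree_le N i).trans (le_natDegree_of_mem_supp i hi))

lemma phi_coeff_of_le (N : ℝ) (D : Polynomial ℝ) {n : ℕ} (h : D.natDegree ≤ n) :
    (phi N D).coeff n = D.coeff n * (M0 N / N ^ n) := by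
  rw [phi, Polynomial.sum, finset_sum_coeff]
  rw [Finset.sum_eq_single n (fun m hm hne => ?_) (fun hn => ?_)]
  · rw [coeff_C_mul, q_coeff_self]
  · have hmn : m < n := lt_of_le_of_ne ((le_natDegree_of_mem_supp m hm).trans h) hne
    rw [coeff_C_mul, coeff_eq_zero_of_natDegree_lt ((q_natDegree_le N m).trans_lt hmn), mul_zero]
  · rw [coeff_C_mul, notMem_support_iff.mp hn, zero_mul]

lemma phi_injective {N : ℝ} (hN : 0 < N) {D : Polynomial ℝ} (h : phi N D = 0) : D = 0 := by
  by_contra hD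
  have h1 : (phi N D).coeff D.natDegree = D.leadingCoeff * (M0 N / N ^ D.natDegree) :=
    phi_coeff_of_le N D le_rfl
  rw [h, coeff_zero] at h1
  have h2 : D.leadingCoeff ≠ 0 := leadingCoeff_ne_zero.mpr hD
  have h3 : M0 N / N ^ D.natDegree ≠ 0 := by
    have := M0_pos hN
    positivity
  exact absurd h1.symm (mul_ne_zero h2 h3)


lemma gauss_integrable_poly (N : ℝ) (hN : 0 < N) (D : Polynomial ℝ) (t : ℝ) :
    Integrable (fun x : ℝ => D.eval x * rexp (-(N/2) * x ^ 2 + t * x)) := by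
  induction D using Polynomial.induction_on' with
  | add p r hp hr => simpa [eval_add, add_mul] using hp.fun_add hr
  | monomial n a =>
    simpa [eval_monomial, mul_assoc] using (gauss_integrable (N/2) (by positivity) n t).const_mul a

lemma int_gauss_zero (N : ℝ) (hN : 0 < N) (t : ℝ) :
    ∫ x : ℝ, rexp (-(N/2) * x ^ 2 + t * x) = rexp (t^2/(2*N)) * M0 N := by
  have hN' : N ≠ 0 := ne_of_gt hN
  have key : (fun x : ℝ => rexp (-(N/2) * x ^ 2 + t * x))
      = fun x : ℝ => rexp (t^2/(2*N)) * rexp (-(N/2) * (x - t/N) ^ 2) := by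
    funext x
    rw [← exp_add]
    congr 1
    field_simp
    ring
  rw [key, integral_const_mul]
  congr 1
  exact integral_sub_right_eq_self (fun x => rexp (-(N/2) * x ^ 2)) (t/N)

lemma gauss_ibp (N : ℝ) (hN : 0 < N) (m : ℕ) (t : ℝ) :
    N * ∫ x : ℝ, x ^ (m+1) * rexp (-(N/2) * x ^ 2 + t * x)
      = (m : ℝ) * (∫ x : ℝ, x ^ (m-1) * rexp (-(N/2) * x ^ 2 + t * x))
        + t * ∫ x : ℝ, x ^ m * rexp (-(N/2) * x ^ 2 + t * x) := by
  set E : ℝ → ℝ := fun x => rexp (-(N/2) * x ^ 2 + t * x) with hE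
  have hb : (0:ℝ) < N/2 := by positivity
  have hEd : ∀ x : ℝ, HasDerivAt E ((t - N * x) * E x) x := by
    intro x
    have h1 : HasDerivAt (fun x : ℝ => -(N/2) * x ^ 2 + t * x) (-(N/2) * (2 * x ^ 1) + t * 1) x :=
      ((hasDerivAt_pow 2 x).const_mul (-(N/2))).add ((hasDerivAt_id x).const_mul t)
    have h2 := h1.exp
    convert h2 using 1
    simp [hE]
    ring
  set u : ℝ → ℝ := fun x => x ^ m * E x with hu
  set f' : ℝ → ℝ := fun x =>
    (m : ℝ) * (x ^ (m-1) * E x) + (t * (x ^ m * E x) - N * (x ^ (m+1) * E x)) with hf'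
  have hud : ∀ x : ℝ, HasDerivAt u (f' x) x := by
    intro x
    have : HasDerivAt (fun i : ℝ => i ^ m * E i)
        (↑m * x ^ (m - 1) * E x + x ^ m * ((t - N * x) * E x)) x :=
      (hasDerivAt_pow m x).fun_mul (hEd x)
    convert this using 1
    simp only [hf', hE]
    cases m with
    | zero =>
      norm_num
      try ring
    | succ k =>
      push_cast
      try ring
      try (ring_nf; rw [pow_succ]; ring)
  have hi1 : Integrable (fun x : ℝ => x ^ (m-1) * E x) := gauss_integrable (N/2) hb _ t
  have hi2 : Integrable (fun x : ℝ => x ^ m * E x) := gauss_integrable (N/2) hb _ t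
  have hi3 : Integrable (fun x : ℝ => x ^ (m+1) * E x) := gauss_integrable (N/2) hb _ t
  have hIf' : Integrable f' :=
    (hi1.const_mul _).add ((hi2.const_mul t).sub (hi3.const_mul N))
  have htop : Tendsto u atTop (𝓝 0) := gauss_tendsto_top (N/2) hb m t
  have hbot : Tendsto u atBot (𝓝 0) := gauss_tendsto_bot (N/2) hb m t
  have hIoi : ∫ x in Set.Ioi (0:ℝ), f' x = 0 - u 0 :=
    integral_Ioi_of_hasDerivAt_of_tendsto' (fun x _ => hud x) hIf'.integrableOn htop
  have hIic : ∫ x in Set.Iic (0:ℝ), f' x = u 0 - 0 :=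
    integral_Iic_of_hasDerivAt_of_tendsto
      ((hud 0).continuousAt.continuousWithinAt) (fun x _ => hud x) hIf'.integrableOn hbot
  have hsum : ∫ x : ℝ, f' x = 0 := by
    rw [← intervalIntegral.integral_Iic_add_Ioi hIf'.integrableOn hIf'.integrableOn, hIoi, hIic]
    ring
  have e1 : ∫ x : ℝ, f' x = (∫ x : ℝ, (m:ℝ) * (x ^ (m-1) * E x))
      + ∫ x : ℝ, (t * (x ^ m * E x) - N * (x ^ (m+1) * E x)) :=
    integral_add (hi1.const_mul _) ((hi2.const_mul t).sub (hi3.const_mul N))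
  have e2 : ∫ x : ℝ, (t * (x ^ m * E x) - N * (x ^ (m+1) * E x))
      = (∫ x : ℝ, t * (x ^ m * E x)) - ∫ x : ℝ, N * (x ^ (m+1) * E x) :=
    integral_sub (hi2.const_mul t) (hi3.const_mul N)
  rw [e1, e2, integral_const_mul, integral_const_mul, integral_const_mul] at hsum
  have goal1 : N * ∫ x : ℝ, x ^ (m+1) * E x
      = (m : ℝ) * (∫ x : ℝ, x ^ (m-1) * E x) + t * ∫ x : ℝ, x ^ m * E x := by linarith
  exact goal1

lemma int_pow_gauss (N : ℝ) (hN : 0 < N) :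
    ∀ (m : ℕ) (t : ℝ), ∫ x : ℝ, x ^ m * rexp (-(N/2) * x ^ 2 + t * x)
      = rexp (t^2/(2*N)) * (q N m).eval t := by
  intro m
  induction m using Nat.strong_induction_on with
  | _ m ih =>
    match m with
    | 0 =>
      intro t
      simpa [q_zero] using int_gauss_zero N hN t
    | (m+1) =>
      intro t
      have hN' : N ≠ 0 := ne_of_gt hN
      have h := gauss_ibp N hN m t
      rw [ih m (by omega) t] at h
      have h' : ∫ x : ℝ, x ^ (m-1) * rexp (-(N/2) * x ^ 2 + t * x)
          = rexp (t^2/(2*N)) * (q N (m-1)).eval t := ih (m-1) (by omega) t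
      rw [h'] at h
      apply mul_left_cancel₀ hN'
      rw [h, q_succ]
      simp only [eval_add, eval_mul, eval_C, eval_X]
      field_simp
      ring

lemma int_poly_gauss (N : ℝ) (hN : 0 < N) (D : Polynomial ℝ) (t : ℝ) :
    ∫ x : ℝ, D.eval x * rexp (-(N/2) * x ^ 2 + t * x)
      = rexp (t^2/(2*N)) * (phi N D).eval t := by
  induction D using Polynomial.induction_on' with
  | add p r hp hr =>
    have hint := integral_add (gauss_integrable_poly N hN p t) (gauss_integrable_poly N hN r t)
    calc ∫ x : ℝ, (p+r).eval x * rexp (-(N/2) * x ^ 2 + t * x)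
        = ∫ x : ℝ, (p.eval x * rexp (-(N/2) * x ^ 2 + t * x)
            + r.eval x * rexp (-(N/2) * x ^ 2 + t * x)) := by
          congr 1; funext x; rw [eval_add]; ring
      _ = (∫ x : ℝ, p.eval x * rexp (-(N/2) * x ^ 2 + t * x))
            + ∫ x : ℝ, r.eval x * rexp (-(N/2) * x ^ 2 + t * x) := hint
      _ = rexp (t^2/(2*N)) * (phi N (p+r)).eval t := by rw [hp, hr, phi_add, eval_add]; ring
  | monomial n a =>
    calc ∫ x : ℝ, (monomial n a).eval x * rexp (-(N/2) * x ^ 2 + t * x)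
        = ∫ x : ℝ, a * (x ^ n * rexp (-(N/2) * x ^ 2 + t * x)) := by
          congr 1; funext x; rw [eval_monomial]; ring
      _ = a * ∫ x : ℝ, x ^ n * rexp (-(N/2) * x ^ 2 + t * x) := integral_const_mul _ _
      _ = rexp (t^2/(2*N)) * (phi N (monomial n a)).eval t := by
          rw [int_pow_gauss N hN n t, phi_monomial]
          simp only [eval_mul, eval_C]
          ring

/-- span of iterated derivatives of `phi N D` with index `< j`, as an `ℝ[X]`-module -/
def TS (N : ℝ) (D : Polynomial ℝ) (j : ℕ) : Submodule (Polynomial ℝ) (Polynomial ℝ) :=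
  Submodule.span (Polynomial ℝ)
    ((fun i => (⇑derivative)^[i] (phi N D)) '' (Set.Iio j))

lemma TS_mono (N : ℝ) (D : Polynomial ℝ) (j : ℕ) : TS N D j ≤ TS N D (j+1) :=
  Submodule.span_mono (Set.image_mono (Set.Iio_subset_Iio (by omega)))

lemma TS_deriv (N : ℝ) (D : Polynomial ℝ) (j : ℕ) {p : Polynomial ℝ} (hp : p ∈ TS N D j) :
    derivative p ∈ TS N D (j+1) := by
  refine Submodule.span_induction
    (p := fun x _ => derivative x ∈ TS N D (j+1)) ?_ ?_ ?_ ?_ hp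
  · rintro x ⟨i, hi, rfl⟩
    simp only []
    rw [show derivative ((⇑derivative)^[i] (phi N D)) = (⇑derivative)^[i+1] (phi N D) from
      (Function.iterate_succ_apply' _ _ _).symm]
    exact Submodule.subset_span ⟨i+1, by simpa using hi, rfl⟩
  · simp only [map_zero]
    exact Submodule.zero_mem _
  · intro x y _ _ hx hy
    rw [derivative_add]
    exact Submodule.add_mem _ hx hy
  · intro c x hx ihx
    have hx' : x ∈ TS N D (j+1) := TS_mono N D j hx
    rw [smul_eq_mul, derivative_mul]
    exact Submodule.add_mem _
      (by rw [← smul_eq_mul]; exact Submodule.smul_mem _ _ hx')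
      (by rw [← smul_eq_mul]; exact Submodule.smul_mem _ _ ihx)

lemma key_rep (N : ℝ) (D : Polynomial ℝ) (j : ℕ) :
    phi N (X ^ j * D) - (⇑derivative)^[j] (phi N D) ∈ TS N D j := by
  induction j with
  | zero =>
    simp only [pow_zero, one_mul, Function.iterate_zero, id_eq, sub_self]
    exact Submodule.zero_mem _
  | succ j ih =>
    have hXD : X ^ (j+1) * D = X * (X ^ j * D) := by ring
    rw [hXD, phi_X_mul]
    set F := phi N D with hF
    set G := phi N (X ^ j * D) with hG
    set p := G - (⇑derivative)^[j] F with hp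
    have hGe : G = p + (⇑derivative)^[j] F := by rw [hp]; ring
    have hgoal : C N⁻¹ * X * G + derivative G - (⇑derivative)^[j+1] F
        = (C N⁻¹ * X) * p + (C N⁻¹ * X) * ((⇑derivative)^[j] F) + derivative p := by
      rw [Function.iterate_succ_apply', hGe, derivative_add]
      ring
    rw [hgoal]
    refine Submodule.add_mem _ (Submodule.add_mem _ ?_ ?_) ?_
    · rw [← smul_eq_mul]
      exact Submodule.smul_mem _ _ (TS_mono N D j ih)
    · rw [← smul_eq_mul]
      exact Submodule.smul_mem _ _ (Submodule.subset_span ⟨j, by simp, rfl⟩)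
    · exact TS_deriv N D j ih

lemma eval_TS_zero (N : ℝ) (D : Polynomial ℝ) (j : ℕ) (t₀ : ℝ)
    (h : ∀ i < j, ((⇑derivative)^[i] (phi N D)).eval t₀ = 0) :
    ∀ p ∈ TS N D j, p.eval t₀ = 0 := by
  intro p hp
  refine Submodule.span_induction (p := fun x _ => x.eval t₀ = 0) ?_ ?_ ?_ ?_ hp
  · rintro x ⟨i, hi, rfl⟩
    exact h i hi
  · simp
  · intro x y _ _ hx hy
    rw [eval_add, hx, hy, add_zero]
  · intro c x _ hx
    rw [smul_eq_mul, eval_mul, hx, mul_zero]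

lemma orth_to_deriv (N : ℝ) (D : Polynomial ℝ) (t₀ : ℝ) (k : ℕ)
    (h : ∀ j < k, (phi N (X ^ j * D)).eval t₀ = 0) :
    ∀ j < k, ((⇑derivative)^[j] (phi N D)).eval t₀ = 0 := by
  intro j
  induction j using Nat.strong_induction_on with
  | _ j ih =>
    intro hj
    have hmem := key_rep N D j
    have hz : (phi N (X ^ j * D) - (⇑derivative)^[j] (phi N D)).eval t₀ = 0 :=
      eval_TS_zero N D j t₀ (fun i hi => ih i hi (hi.trans hj)) _ hmem
    have hGj := h j hj
    rw [eval_sub, hGj, zero_sub, neg_eq_zero] at hz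
    exact hz

lemma final_alg (Ninv a Na γ β δ e1 e2 : ℝ) (m₁ m₂ : ℕ)
    (hβ : Ninv * β = γ) (hδ1 : e1 * δ = ((m₁+1 : ℕ) : ℝ) * β)
    (hδ2 : e2 * δ = ((m₂+1 : ℕ) : ℝ) * β) (ha : a * β = Na * γ) :
    C Ninv * X * (C β * ((X - C Na)^(m₁+1) * (X + C Na)^(m₂+1)))
      + derivative (C β * ((X - C Na)^(m₁+1) * (X + C Na)^(m₂+1)))
      + C a * (C β * ((X - C Na)^(m₁+1) * (X + C Na)^(m₂+1)))
      - C e1 * (C δ * ((X - C Na)^m₁ * (X + C Na)^(m₂+1)))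
      - C e2 * (C δ * ((X - C Na)^(m₁+1) * (X + C Na)^m₂))
      - C γ * ((X - C Na)^(m₁+1) * (X + C Na)^(m₂+2)) = 0 := by
  have hβ' : (C Ninv : Polynomial ℝ) * C β = C γ := by rw [← C_mul, hβ]
  have hδ1' : (C e1 : Polynomial ℝ) * C δ = C ((m₁+1 : ℕ) : ℝ) * C β := by
    rw [← C_mul, ← C_mul, hδ1]
  have hδ2' : (C e2 : Polynomial ℝ) * C δ = C ((m₂+1 : ℕ) : ℝ) * C β := by
    rw [← C_mul, ← C_mul, hδ2]
  have ha' : (C a : Polynomial ℝ) * C β = C Na * C γ := by rw [← C_mul, ← C_mul, ha]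
  rw [derivative_C_mul, derivative_mul, derivative_pow, derivative_pow,
    derivative_X_sub_C, derivative_X_add_C, Nat.add_sub_cancel, Nat.add_sub_cancel,
    mul_one, mul_one]
  linear_combination (X * ((X - C Na)^(m₁+1) * (X + C Na)^(m₂+1))) * hβ'
    + ((X - C Na)^(m₁+1) * (X + C Na)^(m₂+1)) * ha'
    - ((X - C Na)^m₁ * (X + C Na)^(m₂+1)) * hδ1'
    - ((X - C Na)^(m₁+1) * (X + C Na)^m₂) * hδ2'

lemma orth_phi (N : ℝ) (hN : 0 < N) (D : Polynomial ℝ) (t₀ : ℝ) (k : ℕ)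
    (h : ∀ j < k, ∫ x : ℝ, D.eval x * x ^ j * rexp (-(N/2) * x ^ 2 + t₀ * x) = 0) :
    ∀ j < k, ((⇑derivative)^[j] (phi N D)).eval t₀ = 0 := by
  apply orth_to_deriv
  intro j hj
  have hI := int_poly_gauss N hN (X ^ j * D) t₀
  have hfun : (fun x : ℝ => (X ^ j * D).eval x * rexp (-(N/2) * x ^ 2 + t₀ * x))
      = fun x : ℝ => D.eval x * x ^ j * rexp (-(N/2) * x ^ 2 + t₀ * x) := by
    funext x
    rw [eval_mul, eval_pow, eval_X]
    ring
  rw [hfun, h j hj] at hI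
  have := (exp_ne_zero (t₀^2/(2*N)))
  field_simp at hI
  exact (mul_eq_zero.mp hI.symm).resolve_left this

lemma pow_X_sub_C_dvd {F : Polynomial ℝ} (hF : F ≠ 0) (c : ℝ) (k : ℕ)
    (h : ∀ j < k, ((⇑derivative)^[j] F).eval c = 0) : (X - C c) ^ k ∣ F := by
  rcases Nat.eq_zero_or_pos k with rfl | hk
  · simp
  · obtain ⟨K, rfl⟩ : ∃ K, k = K + 1 := ⟨k - 1, by omega⟩
    have hlt : K < rootMultiplicity c F :=
      (lt_rootMultiplicity_iff_isRoot_iterate_derivative hF).2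
        (fun m hm => h m (by omega))
    exact dvd_trans (pow_dvd_pow _ hlt) (pow_rootMultiplicity_dvd F c)

lemma mhp_phi {N a : ℝ} (hN : 0 < N) (ha : a ≠ 0) (k₁ k₂ : ℕ) (P : Polynomial ℝ)
    (h : IsMHP N a k₁ k₂ P) :
    phi N P = C (M0 N / N ^ (k₁ + k₂)) * ((X - C (N*a)) ^ k₁ * (X + C (N*a)) ^ k₂) := by
  obtain ⟨hmon, hdeg, h1, h2⟩ := h
  have hN' : N ≠ 0 := ne_of_gt hN
  set n := k₁ + k₂ with hn
  have hcoeff : (phi N P).coeff n = M0 N / N ^ n := by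
    rw [← hdeg] at hn ⊢
    rw [phi_coeff_of_le N P le_rfl, Monic.coeff_natDegree hmon, one_mul]
  have hM0 : M0 N / N ^ n ≠ 0 := by
    have := M0_pos hN
    positivity
  have hF0 : phi N P ≠ 0 := fun hz => by simp [hz] at hcoeff; exact hM0 hcoeff.symm
  -- derivative conditions at N*a
  have hw1 : ∀ j < k₁, ∫ x : ℝ, P.eval x * x ^ j * rexp (-(N/2) * x ^ 2 + (N*a) * x) = 0 := by
    intro j hj
    have := h1 j hj
    have hfun : (fun x : ℝ => P.eval x * x ^ j * w1 N a x)
        = fun x : ℝ => P.eval x * x ^ j * rexp (-(N/2) * x ^ 2 + (N*a) * x) := by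
      funext x
      rw [w1]
      congr 2
      ring
    rwa [hfun] at this
  have hw2 : ∀ j < k₂, ∫ x : ℝ, P.eval x * x ^ j * rexp (-(N/2) * x ^ 2 + (-(N*a)) * x) = 0 := by
    intro j hj
    have := h2 j hj
    have hfun : (fun x : ℝ => P.eval x * x ^ j * w2 N a x)
        = fun x : ℝ => P.eval x * x ^ j * rexp (-(N/2) * x ^ 2 + (-(N*a)) * x) := by
      funext x
      rw [w2]
      congr 2
      ring
    rwa [hfun] at this
  have hd1 := orth_phi N hN P (N*a) k₁ hw1
  have hd2 := orth_phi N hN P (-(N*a)) k₂ hw2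
  have dv1 : (X - C (N*a)) ^ k₁ ∣ phi N P := pow_X_sub_C_dvd hF0 _ _ hd1
  have dv2 : (X + C (N*a)) ^ k₂ ∣ phi N P := by
    have := pow_X_sub_C_dvd hF0 (-(N*a)) k₂ hd2
    rwa [map_neg, sub_neg_eq_add] at this
  have hcop : IsCoprime ((X - C (N*a)) ^ k₁) ((X + C (N*a)) ^ k₂) := by
    have hne : IsUnit ((N*a) - (-(N*a))) := by
      rw [isUnit_iff_ne_zero]
      intro hz
      apply mul_ne_zero hN' ha
      linarith [hz]
    have := isCoprime_X_sub_C_of_isUnit_sub hne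
    rw [map_neg, sub_neg_eq_add] at this
    exact this.pow
  obtain ⟨g, hg⟩ := hcop.mul_dvd dv1 dv2
  set W : Polynomial ℝ := (X - C (N*a)) ^ k₁ * (X + C (N*a)) ^ k₂ with hW
  have hWmon : W.Monic := ((monic_X_sub_C (N*a)).pow k₁).mul ((monic_X_add_C (N*a)).pow k₂)
  have hWdeg : W.natDegree = n := by
    rw [hW, natDegree_mul (Monic.ne_zero ((monic_X_sub_C (N*a)).pow k₁))
      (Monic.ne_zero ((monic_X_add_C (N*a)).pow k₂)), natDegree_pow, natDegree_pow,
      natDegree_X_sub_C, natDegree_X_add_C]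
    simp [hn]
  have hg0 : g ≠ 0 := by
    intro hz
    rw [hz, mul_zero] at hg
    exact hF0 hg
  have hgdeg : g.natDegree = 0 := by
    have hle : (phi N P).natDegree ≤ n := hdeg ▸ phi_natDegree_le N P
    have := natDegree_mul (Monic.ne_zero hWmon) hg0
    rw [← hg, hWdeg] at this
    omega
  obtain ⟨γ, rfl⟩ : ∃ γ : ℝ, g = C γ := ⟨g.coeff 0, eq_C_of_natDegree_eq_zero hgdeg⟩
  have hγ : γ = M0 N / N ^ n := by
    have hcW : (W * C γ).coeff n = γ := by
      rw [coeff_mul_C, ← hWdeg, Monic.coeff_natDegree hWmon, one_mul]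
    rw [← hg] at hcW
    rw [hcoeff] at hcW
    exact hcW.symm
  rw [hg, hγ, mul_comm]

end St14

/-- Recurrence in the second index for multiple Hermite polynomials. -/
theorem statement14 (N a : ℝ) (hN : 0 < N) (ha : a ≠ 0)
    (P : ℕ → ℕ → Polynomial ℝ) (hP : ∀ k₁ k₂ : ℕ, IsMHP N a k₁ k₂ (P k₁ k₂))
    (k₁ k₂ : ℕ) (hk₁ : 1 ≤ k₁) (hk₂ : 1 ≤ k₂) :
    ∀ z : ℝ, (P k₁ (k₂ + 1)).eval z =
      (z + a) * (P k₁ k₂).eval z - (k₁ : ℝ) / N * (P (k₁ - 1) k₂).eval z -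
        (k₂ : ℝ) / N * (P k₁ (k₂ - 1)).eval z := by
  obtain ⟨m₁, rfl⟩ : ∃ m, k₁ = m + 1 := ⟨k₁ - 1, by omega⟩
  obtain ⟨m₂, rfl⟩ : ∃ m, k₂ = m + 1 := ⟨k₂ - 1, by omega⟩
  have hN' : N ≠ 0 := ne_of_gt hN
  have h00 := St14.mhp_phi hN ha (m₁+1) (m₂+2) _ (hP (m₁+1) (m₂+2))
  have h11 := St14.mhp_phi hN ha (m₁+1) (m₂+1) _ (hP (m₁+1) (m₂+1))
  have h10 := St14.mhp_phi hN ha m₁ (m₂+1) _ (hP m₁ (m₂+1))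
  have h01 := St14.mhp_phi hN ha (m₁+1) m₂ _ (hP (m₁+1) m₂)
  rw [show (m₁+1) + m₂ = m₁ + (m₂+1) by omega] at h01
  set γ := St14.M0 N / N ^ ((m₁+1) + (m₂+2)) with hγdef
  set β := St14.M0 N / N ^ ((m₁+1) + (m₂+1)) with hβdef
  set δ := St14.M0 N / N ^ (m₁ + (m₂+1)) with hδdef
  have hβ : N⁻¹ * β = γ := by
    rw [hβdef, hγdef, show (m₁+1) + (m₂+2) = ((m₁+1) + (m₂+1)) + 1 by omega, pow_succ]
    field_simp
    all_goals first | (left; first | trivial | ring) | ring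
  have hδ1 : ((m₁+1 : ℕ) : ℝ)/N * δ = ((m₁+1 : ℕ) : ℝ) * β := by
    rw [hδdef, hβdef, show (m₁+1) + (m₂+1) = (m₁ + (m₂+1)) + 1 by omega, pow_succ]
    field_simp
    all_goals first | (left; first | trivial | ring) | ring
  have hδ2 : ((m₂+1 : ℕ) : ℝ)/N * δ = ((m₂+1 : ℕ) : ℝ) * β := by
    rw [hδdef, hβdef, show (m₁+1) + (m₂+1) = (m₁ + (m₂+1)) + 1 by omega, pow_succ]
    field_simp
    all_goals first | (left; first | trivial | ring) | ring
  have ha2 : a * β = (N*a) * γ := by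
    rw [hβdef, hγdef, show (m₁+1) + (m₂+2) = ((m₁+1) + (m₂+1)) + 1 by omega, pow_succ]
    field_simp
    all_goals first | (left; first | trivial | ring) | ring
  have hphiR : St14.phi N ((X + C a) * P (m₁+1) (m₂+1)
      - C (((m₁+1 : ℕ) : ℝ)/N) * P m₁ (m₂+1)
      - C (((m₂+1 : ℕ) : ℝ)/N) * P (m₁+1) m₂
      - P (m₁+1) (m₂+2)) = 0 := by
    rw [St14.phi_sub, St14.phi_sub, St14.phi_sub, add_mul, St14.phi_add, St14.phi_X_mul,
      St14.phi_C_mul, St14.phi_C_mul, St14.phi_C_mul, h11, h10, h01, h00]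
    exact St14.final_alg N⁻¹ a (N*a) γ β δ _ _ m₁ m₂ hβ hδ1 hδ2 ha2
  have hR := St14.phi_injective hN hphiR
  intro z
  have hz := congrArg (Polynomial.eval z) hR
  simp only [eval_sub, eval_add, eval_mul, eval_C, eval_X, eval_zero] at hz
  rw [show m₂ + 1 + 1 = m₂ + 2 by omega, show m₁ + 1 - 1 = m₁ by omega,
    show m₂ + 1 - 1 = m₂ by omega]
  linarith

end
end

section
/- Let N > 0 and a ≠ 0 be real. The multiple Hermite polynomials satisfy, for all integers k₁, k₂ ≥ 1 and all z, the two nearest-neighbor relations P_{k₁+1,k₂−1}(z) = P_{k₁,k₂}(z) − 2a·P_{k₁,k₂−1}(z) and P_{k₁−1,k₂+1}(z) = P_{k₁,k₂}(z) + 2a·P_{k₁−1,k₂}(z). -/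
open MeasureTheory Filter Topology Polynomial Asymptotics

noncomputable section

namespace MHPaux

open Real Set Finset

/-- Gaussian integral of a polynomial against `exp (-(b*(x-t)^2))`. -/
def gInt (b t : ℝ) (Q : ℝ[X]) : ℝ := ∫ x : ℝ, Q.eval x * Real.exp (-(b * (x - t) ^ 2))

/-- Gaussian moments. -/
def gm (b : ℝ) (j : ℕ) : ℝ := ∫ x : ℝ, x ^ j * Real.exp (-(b * x ^ 2))

lemma integrable_pow_gauss {b : ℝ} (hb : 0 < b) (n : ℕ) :
    Integrable (fun x : ℝ => x ^ n * Real.exp (-(b * x ^ 2))) := by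
  have h := integrable_rpow_mul_exp_neg_mul_sq hb (s := (n : ℝ))
    ((by norm_num : (-1 : ℝ) < 0).trans_le n.cast_nonneg)
  simpa [Real.rpow_natCast, neg_mul] using h

lemma integrable_poly_gauss0 {b : ℝ} (hb : 0 < b) (S : ℝ[X]) :
    Integrable (fun x : ℝ => S.eval x * Real.exp (-(b * x ^ 2))) := by
  induction S using Polynomial.induction_on' with
  | monomial n c =>
      simpa [eval_monomial, mul_assoc] using (integrable_pow_gauss hb n).const_mul c
  | add p q hp hq => simp only [eval_add, add_mul]; exact hp.add hq

lemma integrable_poly_gauss {b : ℝ} (hb : 0 < b) (S : ℝ[X]) (t : ℝ) :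
    Integrable (fun x : ℝ => S.eval x * Real.exp (-(b * (x - t) ^ 2))) := by
  have hg : Integrable (fun y : ℝ => (S.comp (X + C t)).eval y * Real.exp (-(b * y ^ 2))) :=
    integrable_poly_gauss0 hb _
  have h := ((measurePreserving_add_right (volume : Measure ℝ) (-t)).integrable_comp
      hg.aestronglyMeasurable).mpr hg
  refine h.congr (Eventually.of_forall fun x => ?_)
  simp [Function.comp, eval_comp, sub_eq_add_neg]

lemma tendsto_poly_gauss_atTop {b : ℝ} (hb : 0 < b) (S : ℝ[X]) (c : ℝ) :
    Tendsto (fun x => S.eval x * Real.exp (-(b * x ^ 2) + c * x)) atTop (𝓝 0) := by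
  have hT : Tendsto (fun x => (1 + S ^ 2 : ℝ[X]).eval x / Real.exp x) atTop (𝓝 0) :=
    Polynomial.tendsto_div_exp_atTop _
  apply squeeze_zero_norm' _ hT
  filter_upwards [eventually_ge_atTop ((c + 1) / b), eventually_ge_atTop 0] with x hx hx0
  have hbx : c + 1 ≤ b * x := by
    rw [div_le_iff₀ hb] at hx; linarith [hx]
  have hE : -(b * x ^ 2) + c * x ≤ -x := by nlinarith
  have h1 : |S.eval x| ≤ (1 + S ^ 2 : ℝ[X]).eval x := by
    simp only [eval_add, eval_one, eval_pow]
    nlinarith [sq_abs (S.eval x), sq_nonneg (|S.eval x| - 1)]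
  have h2 : Real.exp (-(b * x ^ 2) + c * x) ≤ Real.exp (-x) := Real.exp_le_exp.2 hE
  calc ‖S.eval x * Real.exp (-(b * x ^ 2) + c * x)‖
      = |S.eval x| * Real.exp (-(b * x ^ 2) + c * x) := by
        rw [norm_mul, Real.norm_eq_abs, Real.norm_eq_abs, abs_of_pos (Real.exp_pos _)]
    _ ≤ (1 + S ^ 2 : ℝ[X]).eval x * Real.exp (-x) := by
        apply mul_le_mul h1 h2 (Real.exp_pos _).le
        exact (abs_nonneg _).trans h1
    _ = (1 + S ^ 2 : ℝ[X]).eval x / Real.exp x := by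
        rw [Real.exp_neg, div_eq_mul_inv]

lemma tendsto_poly_gauss_atBot {b : ℝ} (hb : 0 < b) (S : ℝ[X]) (c : ℝ) :
    Tendsto (fun x => S.eval x * Real.exp (-(b * x ^ 2) + c * x)) atBot (𝓝 0) := by
  have h := (tendsto_poly_gauss_atTop hb (S.comp (-X)) (-c)).comp tendsto_neg_atBot_atTop
  refine h.congr fun x => ?_
  simp [Function.comp, eval_comp]

lemma tendsto_poly_gaussk {b : ℝ} (hb : 0 < b) (S : ℝ[X]) (t : ℝ) :
    Tendsto (fun x => S.eval x * Real.exp (-(b * (x - t) ^ 2))) atTop (𝓝 0) ∧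
    Tendsto (fun x => S.eval x * Real.exp (-(b * (x - t) ^ 2))) atBot (𝓝 0) := by
  have hfun : ∀ x : ℝ, S.eval x * Real.exp (-(b * (x - t) ^ 2)) =
      Real.exp (-(b * t ^ 2)) * (S.eval x * Real.exp (-(b * x ^ 2) + (2 * b * t) * x)) := by
    intro x
    rw [mul_left_comm, ← Real.exp_add]
    congr 2
    ring
  constructor
  · refine Tendsto.congr (fun x => (hfun x).symm) ?_
    simpa using (tendsto_poly_gauss_atTop hb S (2 * b * t)).const_mul (Real.exp (-(b * t ^ 2)))
  · refine Tendsto.congr (fun x => (hfun x).symm) ?_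
    simpa using (tendsto_poly_gauss_atBot hb S (2 * b * t)).const_mul (Real.exp (-(b * t ^ 2)))

lemma gInt_add {b t : ℝ} (hb : 0 < b) (Pp Q : ℝ[X]) :
    gInt b t (Pp + Q) = gInt b t Pp + gInt b t Q := by
  unfold gInt
  simp_rw [eval_add, add_mul]
  exact integral_add (integrable_poly_gauss hb Pp t) (integrable_poly_gauss hb Q t)

lemma gInt_sub {b t : ℝ} (hb : 0 < b) (Pp Q : ℝ[X]) :
    gInt b t (Pp - Q) = gInt b t Pp - gInt b t Q := by
  unfold gInt
  simp_rw [eval_sub, sub_mul]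
  exact integral_sub (integrable_poly_gauss hb Pp t) (integrable_poly_gauss hb Q t)

lemma gInt_C_mul {b t c : ℝ} (Pp : ℝ[X]) :
    gInt b t (C c * Pp) = c * gInt b t Pp := by
  unfold gInt
  simp_rw [eval_mul, eval_C, mul_assoc]
  exact integral_const_mul c _

lemma gInt_zero {b t : ℝ} : gInt b t 0 = 0 := by
  unfold gInt; simp

lemma gInt_sum {b t : ℝ} (hb : 0 < b) {ι : Type*} (s : Finset ι) (f : ι → ℝ[X]) :
    gInt b t (∑ i ∈ s, f i) = ∑ i ∈ s, gInt b t (f i) := by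
  classical
  induction s using Finset.induction_on with
  | empty => simp [gInt_zero]
  | insert _ _ hni ih =>
      rw [Finset.sum_insert hni, Finset.sum_insert hni, gInt_add hb, ih]

/-- integration by parts against the Gaussian. -/
lemma gInt_derivative {b t : ℝ} (hb : 0 < b) (S : ℝ[X]) :
    gInt b t (derivative S) = gInt b t (C (2 * b) * (X - C t) * S) := by
  set G : ℝ[X] := derivative S - C (2 * b) * (X - C t) * S with hG
  have hder : ∀ x : ℝ, HasDerivAt (fun x => S.eval x * Real.exp (-(b * (x - t) ^ 2)))
      (G.eval x * Real.exp (-(b * (x - t) ^ 2))) x := by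
    intro x
    have h0 : HasDerivAt (fun x : ℝ => x - t) 1 x := (hasDerivAt_id x).sub_const t
    have h1 : HasDerivAt (fun x : ℝ => -(b * (x - t) ^ 2)) (-(b * (2 * (x - t)))) x := by
      have := ((h0.pow 2).const_mul b).neg
      refine this.congr_deriv ?_
      norm_num
    have h2 := h1.exp
    have h3 := (S.hasDerivAt x).mul h2
    refine h3.congr_deriv ?_
    simp only [hG, eval_sub, eval_mul, eval_C, eval_X]
    ring
  have hint : Integrable (fun x => G.eval x * Real.exp (-(b * (x - t) ^ 2))) :=
    integrable_poly_gauss hb G t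
  have htop := (tendsto_poly_gaussk hb S t).1
  have hbot := (tendsto_poly_gaussk hb S t).2
  have h1 := integral_Ioi_of_hasDerivAt_of_tendsto' (f' := fun x => G.eval x *
      Real.exp (-(b * (x - t) ^ 2))) (a := 0) (fun x _ => hder x) hint.integrableOn htop
  have h2 := integral_Iic_of_hasDerivAt_of_tendsto' (f' := fun x => G.eval x *
      Real.exp (-(b * (x - t) ^ 2))) (a := 0) (fun x _ => hder x) hint.integrableOn hbot
  have h3 := intervalIntegral.integral_Iic_add_Ioi (b := (0:ℝ)) hint.integrableOn hint.integrableOn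
  have h4 : gInt b t G = 0 := by
    unfold gInt
    rw [← h3, h1, h2]
    ring
  have := gInt_sub (t := t) hb (derivative S) (C (2 * b) * (X - C t) * S)
  rw [← hG, h4] at this
  linarith [this]

/-- Iterated integration by parts: `∫ hasseDeriv j Q * R` equals `∫ Q * A` with `deg A ≤ deg R + j`. -/
lemma gInt_hasse_chain {b t : ℝ} (hb : 0 < b) (Q : ℝ[X]) :
    ∀ (j : ℕ) (R : ℝ[X]), ∃ A : ℝ[X], A.natDegree ≤ R.natDegree + j ∧
      gInt b t (hasseDeriv j Q * R) = gInt b t (Q * A) := by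
  intro j
  induction j with
  | zero => exact fun R => ⟨R, by simp, by simp [hasseDeriv_zero']⟩
  | succ j ih =>
    intro R
    set B : ℝ[X] := C (2 * b) * (X - C t) * R - derivative R with hB
    have hBdeg : B.natDegree ≤ R.natDegree + 1 := by
      refine (natDegree_sub_le _ _).trans (max_le ?_ ?_)
      · calc (C (2 * b) * (X - C t) * R).natDegree
            = (C (2 * b) * ((X - C t) * R)).natDegree := by rw [mul_assoc]
          _ ≤ ((X - C t) * R).natDegree := natDegree_C_mul_le _ _
          _ ≤ (X - C t).natDegree + R.natDegree := natDegree_mul_le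
          _ ≤ R.natDegree + 1 := by rw [natDegree_X_sub_C]; omega
      · exact (natDegree_derivative_le R).trans (by omega)
    obtain ⟨A, hA, hAeq⟩ := ih B
    refine ⟨C ((j : ℝ) + 1)⁻¹ * A, ?_, ?_⟩
    · refine (natDegree_C_mul_le _ _).trans (hA.trans ?_)
      omega
    · have hD : derivative (hasseDeriv j Q) = (j + 1) • hasseDeriv (j + 1) Q := by
        have h := LinearMap.congr_fun (hasseDeriv_comp (R := ℝ) 1 j) Q
        simp only [LinearMap.comp_apply, hasseDeriv_one, LinearMap.smul_apply] at h
        rw [Nat.add_comm 1 j, Nat.choose_one_right] at h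
        exact h
      have step1 : gInt b t (derivative (hasseDeriv j Q) * R)
          = ((j : ℝ) + 1) * gInt b t (hasseDeriv (j + 1) Q * R) := by
        rw [hD, ← Nat.cast_smul_eq_nsmul ℝ, smul_eq_C_mul, mul_assoc, gInt_C_mul]
        push_cast
        ring
      have step2 : gInt b t (derivative (hasseDeriv j Q) * R)
          = gInt b t (hasseDeriv j Q * B) := by
        have hprod : derivative (hasseDeriv j Q) * R
            = derivative (hasseDeriv j Q * R) - hasseDeriv j Q * derivative R := by
          rw [derivative_mul]; ring
        rw [hprod, gInt_sub hb, gInt_derivative hb (hasseDeriv j Q * R), hB]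
        rw [← gInt_sub hb]
        congr 1
        ring
      have hj1 : ((j : ℝ) + 1) ≠ 0 := by positivity
      have := hAeq
      rw [← step2, step1] at this
      -- this : ((j:ℝ)+1) * gInt (hD (j+1) Q * R) = gInt (Q * A)
      have hCmul : gInt b t (Q * (C ((j : ℝ) + 1)⁻¹ * A)) = ((j : ℝ) + 1)⁻¹ * gInt b t (Q * A) := by
        rw [show Q * (C ((j : ℝ) + 1)⁻¹ * A) = C ((j : ℝ) + 1)⁻¹ * (Q * A) by ring, gInt_C_mul]
      rw [hCmul, ← this]
      field_simp

lemma gInt_mul_zero_of_lt {b t : ℝ} (hb : 0 < b) {Q : ℝ[X]} {k : ℕ}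
    (h : ∀ j < k, gInt b t (Q * X ^ j) = 0) {R : ℝ[X]} (hR : R.natDegree < k) :
    gInt b t (Q * R) = 0 := by
  have hRsum := R.as_sum_range' k hR
  rw [show Q * R = ∑ i ∈ range k, Q * monomial i (R.coeff i) by
    rw [← Finset.mul_sum, ← hRsum]]
  rw [gInt_sum hb]
  refine Finset.sum_eq_zero fun i hi => ?_
  rw [show Q * monomial i (R.coeff i) = C (R.coeff i) * (Q * X ^ i) by
    rw [← C_mul_X_pow_eq_monomial]; ring]
  rw [gInt_C_mul, h i (Finset.mem_range.1 hi), mul_zero]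

lemma gInt_hasse_zero {b t : ℝ} (hb : 0 < b) {Q : ℝ[X]} {k : ℕ}
    (h : ∀ j < k, gInt b t (Q * X ^ j) = 0) :
    ∀ j < k, gInt b t (hasseDeriv j Q) = 0 := by
  intro j hj
  obtain ⟨A, hA, hAeq⟩ := gInt_hasse_chain hb Q j 1
  rw [← mul_one (hasseDeriv j Q), hAeq]
  exact gInt_mul_zero_of_lt hb h (lt_of_le_of_lt (by simpa using hA) hj)

/-- The heat transform of a polynomial. -/
def heat (b : ℝ) (M : ℕ) (Q : ℝ[X]) : ℝ[X] :=
  ∑ j ∈ range M, C (gm b j) * hasseDeriv j Q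

lemma heat_eval {b : ℝ} (hb : 0 < b) {M : ℕ} {Q : ℝ[X]} (hM : Q.natDegree < M) (t : ℝ) :
    (heat b M Q).eval t = gInt b t Q := by
  have hshift : gInt b t Q = ∫ x : ℝ, Q.eval (x + t) * Real.exp (-(b * x ^ 2)) := by
    unfold gInt
    rw [← integral_add_right_eq_self (fun x : ℝ => Q.eval x * Real.exp (-(b * (x - t) ^ 2))) t]
    congr 1
    funext x
    simp [add_sub_cancel_right]
  have htay : ∀ x : ℝ, Q.eval (x + t)
      = ∑ j ∈ range M, (hasseDeriv j Q).eval t * x ^ j := by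
    intro x
    have h1 : Q.eval (x + t) = (Polynomial.taylor t Q).eval x := (taylor_eval t Q x).symm
    rw [h1, eval_eq_sum_range' (by rwa [natDegree_taylor]) x]
    exact Finset.sum_congr rfl fun j _ => by rw [taylor_coeff]
  rw [hshift]
  have hint : ∀ j ∈ range M, Integrable
      (fun x : ℝ => (hasseDeriv j Q).eval t * x ^ j * Real.exp (-(b * x ^ 2))) := by
    intro j _
    simpa [mul_assoc] using (integrable_pow_gauss hb j).const_mul ((hasseDeriv j Q).eval t)
  calc (heat b M Q).eval t = ∑ j ∈ range M, gm b j * (hasseDeriv j Q).eval t := by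
        unfold heat; rw [eval_finset_sum]; exact Finset.sum_congr rfl fun j _ => by simp
    _ = ∑ j ∈ range M, ∫ x : ℝ, (hasseDeriv j Q).eval t * x ^ j * Real.exp (-(b * x ^ 2)) := by
        refine Finset.sum_congr rfl fun j _ => ?_
        unfold gm
        rw [mul_comm, ← integral_const_mul]
        congr 1; funext x; ring
    _ = ∫ x : ℝ, ∑ j ∈ range M, (hasseDeriv j Q).eval t * x ^ j * Real.exp (-(b * x ^ 2)) :=
        (integral_finset_sum _ hint).symm
    _ = ∫ x : ℝ, Q.eval (x + t) * Real.exp (-(b * x ^ 2)) := by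
        congr 1; funext x; rw [htay x, Finset.sum_mul]

lemma heat_natDegree_le {b : ℝ} (M : ℕ) (Q : ℝ[X]) : (heat b M Q).natDegree ≤ Q.natDegree := by
  refine natDegree_sum_le_of_forall_le _ _ fun j _ => ?_
  calc (C (gm b j) * hasseDeriv j Q).natDegree
      ≤ (C (gm b j) : ℝ[X]).natDegree + (hasseDeriv j Q).natDegree := natDegree_mul_le
    _ ≤ (hasseDeriv j Q).natDegree := by simp [natDegree_C]
    _ ≤ Q.natDegree - j := natDegree_hasseDeriv_le Q j
    _ ≤ Q.natDegree := Nat.sub_le _ _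

lemma heat_coeff_natDegree {b : ℝ} {M : ℕ} (hM : 0 < M) (Q : ℝ[X]) :
    (heat b M Q).coeff Q.natDegree = gm b 0 * Q.leadingCoeff := by
  unfold heat
  rw [finset_sum_coeff]
  rw [Finset.sum_eq_single 0]
  · rw [hasseDeriv_zero', coeff_C_mul]; rfl
  · intro j _ hj
    rw [coeff_C_mul, hasseDeriv_coeff]
    rw [coeff_eq_zero_of_natDegree_lt (by omega)]
    ring
  · intro h0
    exact absurd (Finset.mem_range.2 hM) h0

lemma gm_zero_pos {b : ℝ} (hb : 0 < b) : 0 < gm b 0 := by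
  unfold gm
  have : (fun x : ℝ => x ^ 0 * Real.exp (-(b * x ^ 2))) = fun x : ℝ => Real.exp (-b * x ^ 2) := by
    funext x; simp [neg_mul]
  rw [this, integral_gaussian]
  positivity

lemma heat_sub {b : ℝ} (M : ℕ) (Pp Q : ℝ[X]) :
    heat b M (Pp - Q) = heat b M Pp - heat b M Q := by
  unfold heat
  rw [← Finset.sum_sub_distrib]
  exact Finset.sum_congr rfl fun j _ => by rw [map_sub, mul_sub]

lemma heat_add {b : ℝ} (M : ℕ) (Pp Q : ℝ[X]) :
    heat b M (Pp + Q) = heat b M Pp + heat b M Q := by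
  unfold heat
  rw [← Finset.sum_add_distrib]
  exact Finset.sum_congr rfl fun j _ => by rw [map_add, mul_add]

lemma hasse_C_mul (j : ℕ) (c : ℝ) (Q : ℝ[X]) :
    hasseDeriv j (C c * Q) = C c * hasseDeriv j Q := by
  simp only [← smul_eq_C_mul]
  exact (hasseDeriv j).map_smul c Q

lemma heat_C_mul {b : ℝ} (M : ℕ) (c : ℝ) (Q : ℝ[X]) :
    heat b M (C c * Q) = C c * heat b M Q := by
  unfold heat
  rw [Finset.mul_sum]
  refine Finset.sum_congr rfl fun j _ => ?_
  rw [hasse_C_mul]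
  ring

lemma hasse_comm (i j : ℕ) (Q : ℝ[X]) :
    hasseDeriv i (hasseDeriv j Q) = hasseDeriv j (hasseDeriv i Q) := by
  have h1 := LinearMap.congr_fun (hasseDeriv_comp (R := ℝ) i j) Q
  have h2 := LinearMap.congr_fun (hasseDeriv_comp (R := ℝ) j i) Q
  simp only [LinearMap.comp_apply, LinearMap.smul_apply] at h1 h2
  rw [h1, h2, Nat.add_comm j i]
  have hc : (i + j).choose j = (i + j).choose i := by
    have h := Nat.choose_symm (Nat.le_add_right i j)
    simpa using h
  rw [hc]

lemma heat_hasseDeriv {b : ℝ} (M : ℕ) (i : ℕ) (Q : ℝ[X]) :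
    hasseDeriv i (heat b M Q) = heat b M (hasseDeriv i Q) := by
  unfold heat
  rw [map_sum]
  refine Finset.sum_congr rfl fun j _ => ?_
  rw [hasse_C_mul, hasse_comm]

lemma pow_X_sub_C_dvd {R : ℝ[X]} {t : ℝ} {k : ℕ}
    (h : ∀ j < k, (hasseDeriv j R).eval t = 0) : (X - C t) ^ k ∣ R := by
  conv_rhs => rw [← sum_taylor_eq R t]
  rw [Polynomial.sum_def]
  refine Finset.dvd_sum fun i hi => ?_
  have hik : k ≤ i := by
    by_contra hik
    push_neg at hik
    have := h i hik
    rw [← taylor_coeff] at this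
    exact (Polynomial.mem_support_iff.1 hi) this
  exact (pow_dvd_pow (X - C t) hik).trans (dvd_mul_left _ _)

lemma eq_zero_of_heat_eq_zero {b : ℝ} (hb : 0 < b) {M : ℕ} (hM : 0 < M) {Q : ℝ[X]}
    (h : heat b M Q = 0) : Q = 0 := by
  by_contra hQ
  have hc := heat_coeff_natDegree (b := b) hM Q
  rw [h, coeff_zero] at hc
  exact absurd hc.symm (mul_ne_zero (gm_zero_pos hb).ne' (leadingCoeff_ne_zero.mpr hQ))

end MHPaux

/-- Nearest-neighbor relations for multiple Hermite polynomials. -/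
theorem statement15 (N a : ℝ) (hN : 0 < N) (ha : a ≠ 0)
    (P : ℕ → ℕ → Polynomial ℝ) (hP : ∀ k₁ k₂ : ℕ, IsMHP N a k₁ k₂ (P k₁ k₂))
    (k₁ k₂ : ℕ) (hk₁ : 1 ≤ k₁) (hk₂ : 1 ≤ k₂) :
    (∀ z : ℝ, (P (k₁ + 1) (k₂ - 1)).eval z =
      (P k₁ k₂).eval z - 2 * a * (P k₁ (k₂ - 1)).eval z) ∧
    (∀ z : ℝ, (P (k₁ - 1) (k₂ + 1)).eval z =
      (P k₁ k₂).eval z + 2 * a * (P (k₁ - 1) k₂).eval z) := by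
  classical
  obtain ⟨n, rfl⟩ : ∃ n, k₁ = n + 1 := ⟨k₁ - 1, by omega⟩
  obtain ⟨m, rfl⟩ : ∃ m, k₂ = m + 1 := ⟨k₂ - 1, by omega⟩
  simp only [Nat.add_sub_cancel]
  set b : ℝ := N / 2 with hbdef
  have hb : 0 < b := by rw [hbdef]; positivity
  set M : ℕ := n + m + 3 with hMdef
  have hMpos : 0 < M := by omega
  have hgm0 : (0:ℝ) < MHPaux.gm b 0 := MHPaux.gm_zero_pos hb
  -- Step 1: identify the heat transform of each multiple Hermite polynomial.
  have key : ∀ m₁ m₂ : ℕ, m₁ + m₂ < M →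
      MHPaux.heat b M (P m₁ m₂)
        = C (MHPaux.gm b 0) * ((X - C a) ^ m₁ * (X - C (-a)) ^ m₂) := by
    intro m₁ m₂ hm
    obtain ⟨hmon, hdeg, h1, h2⟩ := hP m₁ m₂
    -- orthogonality in Gaussian form, first weight
    have hw1 : ∀ j < m₁, MHPaux.gInt b a (P m₁ m₂ * X ^ j) = 0 := by
      intro j hj
      have h0 := h1 j hj
      have hfun : (fun x : ℝ => (P m₁ m₂).eval x * x ^ j * w1 N a x)
          = fun x => Real.exp (b * a ^ 2) *
            ((P m₁ m₂ * X ^ j).eval x * Real.exp (-(b * (x - a) ^ 2))) := by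
        funext x
        have hexp : Real.exp (b * a ^ 2) * Real.exp (-(b * (x - a) ^ 2)) = w1 N a x := by
          rw [w1, ← Real.exp_add]
          congr 1
          rw [hbdef]; ring
        rw [eval_mul, eval_pow, eval_X, ← hexp]
        ring
      have heq : (∫ x : ℝ, (P m₁ m₂).eval x * x ^ j * w1 N a x)
          = Real.exp (b * a ^ 2) * MHPaux.gInt b a (P m₁ m₂ * X ^ j) := by
        unfold MHPaux.gInt
        rw [hfun, integral_const_mul]
      rw [heq] at h0
      exact (mul_eq_zero.mp h0).resolve_left (Real.exp_ne_zero _)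
    -- orthogonality in Gaussian form, second weight
    have hw2 : ∀ j < m₂, MHPaux.gInt b (-a) (P m₁ m₂ * X ^ j) = 0 := by
      intro j hj
      have h0 := h2 j hj
      have hfun : (fun x : ℝ => (P m₁ m₂).eval x * x ^ j * w2 N a x)
          = fun x => Real.exp (b * a ^ 2) *
            ((P m₁ m₂ * X ^ j).eval x * Real.exp (-(b * (x - -a) ^ 2))) := by
        funext x
        have hexp : Real.exp (b * a ^ 2) * Real.exp (-(b * (x - -a) ^ 2)) = w2 N a x := by
          rw [w2, ← Real.exp_add]
          congr 1
          rw [hbdef]; ring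
        rw [eval_mul, eval_pow, eval_X, ← hexp]
        ring
      have heq : (∫ x : ℝ, (P m₁ m₂).eval x * x ^ j * w2 N a x)
          = Real.exp (b * a ^ 2) * MHPaux.gInt b (-a) (P m₁ m₂ * X ^ j) := by
        unfold MHPaux.gInt
        rw [hfun, integral_const_mul]
      rw [heq] at h0
      exact (mul_eq_zero.mp h0).resolve_left (Real.exp_ne_zero _)
    have hdegM : (P m₁ m₂).natDegree < M := by rw [hdeg]; omega
    -- vanishing of Hasse derivatives of the heat transform
    have hz1 : ∀ j < m₁, (hasseDeriv j (MHPaux.heat b M (P m₁ m₂))).eval a = 0 := by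
      intro j hj
      rw [MHPaux.heat_hasseDeriv, MHPaux.heat_eval hb
        (lt_of_le_of_lt ((natDegree_hasseDeriv_le _ j).trans (Nat.sub_le _ _)) hdegM)]
      exact MHPaux.gInt_hasse_zero hb hw1 j hj
    have hz2 : ∀ j < m₂, (hasseDeriv j (MHPaux.heat b M (P m₁ m₂))).eval (-a) = 0 := by
      intro j hj
      rw [MHPaux.heat_hasseDeriv, MHPaux.heat_eval hb
        (lt_of_le_of_lt ((natDegree_hasseDeriv_le _ j).trans (Nat.sub_le _ _)) hdegM)]
      exact MHPaux.gInt_hasse_zero hb hw2 j hj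
    have d1 : (X - C a) ^ m₁ ∣ MHPaux.heat b M (P m₁ m₂) := MHPaux.pow_X_sub_C_dvd hz1
    have d2 : (X - C (-a)) ^ m₂ ∣ MHPaux.heat b M (P m₁ m₂) := MHPaux.pow_X_sub_C_dvd hz2
    have hcop : IsCoprime ((X - C a) ^ m₁) ((X - C (-a)) ^ m₂) := by
      refine IsCoprime.pow ?_
      refine isCoprime_X_sub_C_of_isUnit_sub ?_
      rw [sub_neg_eq_add]
      exact isUnit_iff_ne_zero.2 (by intro h; exact ha (by linarith))
    have hdvd := hcop.mul_dvd d1 d2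
    set G : ℝ[X] := (X - C a) ^ m₁ * (X - C (-a)) ^ m₂ with hGdef
    have hGmon : G.Monic := ((monic_X_sub_C a).pow m₁).mul ((monic_X_sub_C (-a)).pow m₂)
    have hGdeg : G.natDegree = m₁ + m₂ := by
      rw [hGdef, natDegree_mul (pow_ne_zero _ (X_sub_C_ne_zero a))
        (pow_ne_zero _ (X_sub_C_ne_zero (-a))), natDegree_pow, natDegree_pow,
        natDegree_X_sub_C, natDegree_X_sub_C, mul_one, mul_one]
    have hne : MHPaux.heat b M (P m₁ m₂) ≠ 0 := by
      intro h0
      have hc := MHPaux.heat_coeff_natDegree (b := b) hMpos (P m₁ m₂)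
      rw [h0, coeff_zero, hmon.leadingCoeff, mul_one] at hc
      exact hgm0.ne' hc.symm
    obtain ⟨S, hS⟩ := hdvd
    have hSne : S ≠ 0 := by
      rintro rfl
      rw [mul_zero] at hS
      exact hne hS
    have hdegS : S.natDegree = 0 := by
      have hh1 : (MHPaux.heat b M (P m₁ m₂)).natDegree ≤ m₁ + m₂ := by
        have := MHPaux.heat_natDegree_le (b := b) M (P m₁ m₂)
        omega
      have hh2 : (MHPaux.heat b M (P m₁ m₂)).natDegree = G.natDegree + S.natDegree := by
        rw [hS, natDegree_mul hGmon.ne_zero hSne]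
      omega
    obtain ⟨s, rfl⟩ : ∃ s : ℝ, S = C s := ⟨S.coeff 0, eq_C_of_natDegree_eq_zero hdegS⟩
    have hcoeff : (MHPaux.heat b M (P m₁ m₂)).coeff (m₁ + m₂) = MHPaux.gm b 0 := by
      have hc := MHPaux.heat_coeff_natDegree (b := b) hMpos (P m₁ m₂)
      rw [hmon.leadingCoeff, mul_one] at hc
      rw [← hdeg]
      exact hc
    have hcoeff2 : (G * C s).coeff (m₁ + m₂) = s := by
      rw [mul_comm, ← smul_eq_C_mul, coeff_smul, ← hGdeg, smul_eq_mul,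
        ← leadingCoeff, hGmon.leadingCoeff, mul_one]
    have hs : s = MHPaux.gm b 0 := by
      rw [← hcoeff2, ← hS, hcoeff]
    rw [hS, hs, mul_comm]
  -- Step 2: polynomial identities via injectivity of the heat transform
  have hCa : (C (2 * a) : ℝ[X]) = C a + C a := by rw [two_mul, C_add]
  have hv : (X - C (-a) : ℝ[X]) = (X - C a) + C (2 * a) := by rw [hCa, C_neg]; ring
  constructor
  · intro z
    have hQ1 : P (n + 1 + 1) m - (P (n + 1) (m + 1) - C (2 * a) * P (n + 1) m) = 0 := by
      apply MHPaux.eq_zero_of_heat_eq_zero hb hMpos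
      rw [MHPaux.heat_sub, MHPaux.heat_sub, MHPaux.heat_C_mul,
        key (n + 1 + 1) m (by omega), key (n + 1) (m + 1) (by omega),
        key (n + 1) m (by omega), hv]
      ring
    have h0 := sub_eq_zero.mp hQ1
    rw [h0, eval_sub, eval_mul, eval_C]
  · intro z
    have hQ2 : P n (m + 1 + 1) - (P (n + 1) (m + 1) + C (2 * a) * P n (m + 1)) = 0 := by
      apply MHPaux.eq_zero_of_heat_eq_zero hb hMpos
      rw [MHPaux.heat_sub, MHPaux.heat_add, MHPaux.heat_C_mul,
        key n (m + 1 + 1) (by omega), key (n + 1) (m + 1) (by omega),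
        key n (m + 1) (by omega), hv]
      ring
    have h0 := sub_eq_zero.mp hQ2
    rw [h0, eval_add, eval_mul, eval_C]


end
end
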